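/- arXiv:2104.00105 — 3 statements merged into one kernel-verified Lean document; each statement's English description precedes it below -/
import Mathlib

section
/- Let F_▲(x) = 2·max{1 − 2|x|, 0} be the triangle function (so ‖F_▲‖_{L¹(ℝ)} = 1). Then the global maximum of 𝓗(F_▲) on (0,∞) is attained at x = 1/(2√2), and ‖𝓗(F_▲)‖_{L∞(ℝ)} = 𝓗(F_▲)(1/(2√2)) = (4/π)·log(1 + √2). -/
open MeasureTheory Filter

/-- The principal-value Hilbert transform of `F` at `x` exists and equals `L`:
`𝓗(F)(x) = lim_{ε→0⁺} (1/π)·∫_{|t|≥ε} F(x−t)/t dt`. -/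
def pvHilbAt (F : ℝ → ℝ) (x L : ℝ) : Prop :=
  Tendsto (fun ε : ℝ => (1 / Real.pi) * ∫ t in {t : ℝ | ε ≤ |t|}, F (x - t) / t)
    (nhdsWithin 0 (Set.Ioi 0)) (nhds L)

/-- The class `𝒜*`: `F ∈ L¹(ℝ)`, `F ≥ 0` a.e., support contained in `[-1/2,1/2]`. -/
def memAstar (F : ℝ → ℝ) : Prop :=
  Integrable F ∧ (∀ᵐ x ∂(volume : Measure ℝ), 0 ≤ F x) ∧
    ∀ᵐ x ∂(volume : Measure ℝ), x ∉ Set.Icc (-(1/2) : ℝ) (1/2) → F x = 0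

/-- The triangle function `F_▲(x) = 2·max{1 − 2|x|, 0}`, of unit `L¹`-norm. -/
noncomputable def Ftri (x : ℝ) : ℝ := 2 * max (1 - 2 * |x|) 0

/-! ### Auxiliary facts -/


noncomputable def gfun (x : ℝ) : ℝ :=
  (x + 1/2) * Real.log (x + 1/2) + (x - 1/2) * Real.log (x - 1/2) - 2 * x * Real.log x

lemma Ftri_of_ge (y : ℝ) (h : 1/2 ≤ |y|) : Ftri y = 0 := by
  unfold Ftri; rw [max_eq_right (by linarith [abs_nonneg y])]; ring

lemma Ftri_of_mem (y : ℝ) (h : |y| ≤ 1/2) : Ftri y = 2 - 4 * |y| := by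
  unfold Ftri; rw [max_eq_left (by linarith)]; ring

lemma Ftri_even (y : ℝ) : Ftri (-y) = Ftri y := by unfold Ftri; rw [abs_neg]

lemma Ftri_cont : Continuous Ftri := by unfold Ftri; fun_prop

lemma f_contOn (x : ℝ) : ContinuousOn (fun t : ℝ => Ftri (x - t) / t) {t : ℝ | t ≠ 0} := by
  apply ContinuousOn.div
  · exact (Ftri_cont.comp (continuous_const.sub continuous_id)).continuousOn
  · exact continuousOn_id
  · exact fun t ht => ht

lemma f_zero_left (x t : ℝ) (h : t ≤ x - 1/2) : Ftri (x - t) / t = 0 := by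
  rw [Ftri_of_ge (x - t) (by rw [abs_of_nonneg (by linarith)]; linarith), zero_div]

lemma f_zero_right (x t : ℝ) (h : x + 1/2 ≤ t) : Ftri (x - t) / t = 0 := by
  rw [Ftri_of_ge (x - t) (by rw [abs_of_nonpos (by linarith)]; linarith), zero_div]

lemma pieceInt (c d p q : ℝ) (h : (0:ℝ) ∉ Set.uIcc p q) :
    ∫ t in p..q, (c + d * t) / t = c * Real.log (q / p) + d * (q - p) := by
  have hne : ∀ t ∈ Set.uIcc p q, t ≠ 0 := fun t ht h0 => h (h0 ▸ ht)
  have hcg : Set.EqOn (fun t : ℝ => (c + d * t) / t) (fun t : ℝ => c * (1 / t) + d)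
      (Set.uIcc p q) := by
    intro t ht
    field_simp [hne t ht]
  rw [intervalIntegral.integral_congr hcg]
  have hint1 : IntervalIntegrable (fun t : ℝ => c * (1 / t)) volume p q := by
    apply ContinuousOn.intervalIntegrable
    exact (continuousOn_const.div continuousOn_id (hne)).const_smul c
  have hint2 : IntervalIntegrable (fun _ : ℝ => d) volume p q := intervalIntegrable_const
  rw [intervalIntegral.integral_add hint1 hint2, intervalIntegral.integral_const_mul,
    integral_one_div h, intervalIntegral.integral_const, smul_eq_mul]
  ring

lemma eval_left (x p q : ℝ) (h0 : (0:ℝ) ∉ Set.uIcc p q)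
    (hin : ∀ t ∈ Set.uIcc p q, x - 1/2 ≤ t ∧ t ≤ x) :
    ∫ t in p..q, Ftri (x - t) / t = (2 - 4*x) * Real.log (q / p) + 4 * (q - p) := by
  rw [intervalIntegral.integral_congr (g := fun t : ℝ => ((2 - 4*x) + 4 * t) / t)
    (fun t ht => by
      obtain ⟨h1, h2⟩ := hin t ht
      rw [Ftri_of_mem (x - t) (by rw [abs_of_nonneg (by linarith)]; linarith),
        abs_of_nonneg (by linarith)]
      ring_nf)]
  exact pieceInt _ _ _ _ h0

lemma eval_right (x p q : ℝ) (h0 : (0:ℝ) ∉ Set.uIcc p q)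
    (hin : ∀ t ∈ Set.uIcc p q, x ≤ t ∧ t ≤ x + 1/2) :
    ∫ t in p..q, Ftri (x - t) / t = (2 + 4*x) * Real.log (q / p) + (-4) * (q - p) := by
  rw [intervalIntegral.integral_congr (g := fun t : ℝ => ((2 + 4*x) + (-4) * t) / t)
    (fun t ht => by
      obtain ⟨h1, h2⟩ := hin t ht
      rw [Ftri_of_mem (x - t) (by rw [abs_of_nonpos (by linarith)]; linarith),
        abs_of_nonpos (by linarith)]
      ring_nf)]
  exact pieceInt _ _ _ _ h0

lemma f_zero_int (x p q : ℝ) (hin : ∀ t ∈ Set.uIcc p q, Ftri (x - t) / t = 0) :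
    ∫ t in p..q, Ftri (x - t) / t = 0 := by
  rw [intervalIntegral.integral_congr (g := fun _ : ℝ => (0:ℝ)) hin]
  simp

lemma f_ii (x p q : ℝ) (h : (0:ℝ) ∉ Set.uIcc p q) :
    IntervalIntegrable (fun t : ℝ => Ftri (x - t) / t) volume p q :=
  ((f_contOn x).mono (fun t ht h0 => h (h0 ▸ ht))).intervalIntegrable

lemma reduce (x ε : ℝ) (hε : 0 < ε) (hεx : ε < x) (hε1 : ε < 1) :
    ∫ t in {t : ℝ | ε ≤ |t|}, Ftri (x - t) / t =
      (∫ t in (-1:ℝ)..(-ε), Ftri (x - t) / t) + ∫ t in ε..(x + 1/2), Ftri (x - t) / t := by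
  set f := fun t : ℝ => Ftri (x - t) / t with hf
  have hx : 0 < x := hε.trans hεx
  have hset : {t : ℝ | ε ≤ |t|} = Set.Iic (-ε) ∪ Set.Ici ε := by
    ext t
    simp only [Set.mem_setOf_eq, Set.mem_union, Set.mem_Iic, Set.mem_Ici, le_abs]
    constructor
    · rintro (h | h); · right; exact h
      · left; linarith
    · rintro (h | h); · right; linarith
      · left; exact h
  have hIic1 : ∀ t ∈ Set.Iic (-1:ℝ), f t = 0 := fun t ht =>
    f_zero_left x t (by simp only [Set.mem_Iic] at ht; linarith)
  have hIoiA : ∀ t ∈ Set.Ioi (x + 1/2), f t = 0 := fun t ht =>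
    f_zero_right x t (le_of_lt ht)
  have hintIic1 : IntegrableOn f (Set.Iic (-1:ℝ)) :=
    (integrableOn_zero).congr_fun (fun t ht => (hIic1 t ht).symm) measurableSet_Iic
  have hintIoiA : IntegrableOn f (Set.Ioi (x + 1/2)) :=
    (integrableOn_zero).congr_fun (fun t ht => (hIoiA t ht).symm) measurableSet_Ioi
  have hintIcc : ∀ a b : ℝ, (0 : ℝ) ∉ Set.Icc a b → IntegrableOn f (Set.Icc a b) := by
    intro a b h0
    exact ((f_contOn x).mono (fun t ht h0' => h0 (h0' ▸ ht))).integrableOn_Icc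
  have hmid1 : IntegrableOn f (Set.Icc (-1:ℝ) (-ε)) :=
    hintIcc _ _ (by intro h; simp only [Set.mem_Icc] at h; linarith)
  have hmid2 : IntegrableOn f (Set.Icc ε (x + 1/2)) :=
    hintIcc _ _ (by intro h; simp only [Set.mem_Icc] at h; linarith)
  have hIic : IntegrableOn f (Set.Iic (-ε)) := by
    rw [show Set.Iic (-ε) = Set.Iic (-1:ℝ) ∪ Set.Ioc (-1:ℝ) (-ε) from
      (Set.Iic_union_Ioc_eq_Iic (by linarith)).symm]
    exact hintIic1.union (hmid1.mono_set Set.Ioc_subset_Icc_self)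
  have hIci : IntegrableOn f (Set.Ici ε) := by
    rw [show Set.Ici ε = Set.Icc ε (x + 1/2) ∪ Set.Ioi (x + 1/2) from
      (Set.Icc_union_Ioi_eq_Ici (by linarith)).symm]
    exact hmid2.union hintIoiA
  rw [hset, setIntegral_union (by
      intro s hs1 hs2 t ht
      have h1 := hs1 ht; have h2 := hs2 ht
      simp only [Set.mem_Iic, Set.mem_Ici, Set.le_eq_subset] at h1 h2
      exact absurd (le_trans h2 h1) (by simp; linarith)) measurableSet_Ici hIic hIci]
  congr 1
  · rw [show Set.Iic (-ε) = Set.Iic (-1:ℝ) ∪ Set.Ioc (-1:ℝ) (-ε) from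
      (Set.Iic_union_Ioc_eq_Iic (by linarith)).symm,
      setIntegral_union (Set.Iic_disjoint_Ioc le_rfl) measurableSet_Ioc hintIic1
        (hmid1.mono_set Set.Ioc_subset_Icc_self),
      setIntegral_eq_zero_of_forall_eq_zero hIic1, zero_add,
      intervalIntegral.integral_of_le (by linarith)]
  · rw [integral_Ici_eq_integral_Ioi,
      show Set.Ioi ε = Set.Ioc ε (x + 1/2) ∪ Set.Ioi (x + 1/2) from
        (Set.Ioc_union_Ioi_eq_Ioi (by linarith)).symm,
      setIntegral_union (Set.Ioc_disjoint_Ioi le_rfl) measurableSet_Ioi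
        (hmid2.mono_set Set.Ioc_subset_Icc_self) hintIoiA,
      setIntegral_eq_zero_of_forall_eq_zero hIoiA, add_zero,
      intervalIntegral.integral_of_le (by linarith)]

lemma caseC (x ε : ℝ) (hx0 : 0 < x) (hx1 : x < 1/2) (hε : 0 < ε) (h1 : ε < x)
    (h2 : ε < 1/2 - x) :
    ∫ t in {t : ℝ | ε ≤ |t|}, Ftri (x - t) / t = 4 * gfun x - 8 * ε := by
  rw [reduce x ε hε h1 (by linarith)]
  have hB : x - 1/2 < 0 := by linarith
  have hBε : x - 1/2 ≤ -ε := by linarith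
  have n1 : (0:ℝ) ∉ Set.uIcc (-1:ℝ) (x - 1/2) := by
    rw [Set.uIcc_of_le (by linarith)]; intro h; simp only [Set.mem_Icc] at h; linarith
  have n2 : (0:ℝ) ∉ Set.uIcc (x - 1/2) (-ε) := by
    rw [Set.uIcc_of_le hBε]; intro h; simp only [Set.mem_Icc] at h; linarith
  have n3 : (0:ℝ) ∉ Set.uIcc ε x := by
    rw [Set.uIcc_of_le (by linarith)]; intro h; simp only [Set.mem_Icc] at h; linarith
  have n4 : (0:ℝ) ∉ Set.uIcc x (x + 1/2) := by
    rw [Set.uIcc_of_le (by linarith)]; intro h; simp only [Set.mem_Icc] at h; linarith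
  rw [← intervalIntegral.integral_add_adjacent_intervals (f_ii x (-1) (x - 1/2) n1)
      (f_ii x (x - 1/2) (-ε) n2),
    ← intervalIntegral.integral_add_adjacent_intervals (f_ii x ε x n3)
      (f_ii x x (x + 1/2) n4),
    f_zero_int x (-1) (x - 1/2) (fun t ht => by
      rw [Set.uIcc_of_le (by linarith)] at ht
      exact f_zero_left x t ht.2),
    eval_left x (x - 1/2) (-ε) n2 (fun t ht => by
      rw [Set.uIcc_of_le hBε] at ht
      exact ⟨ht.1, by linarith [ht.2]⟩),
    eval_left x ε x n3 (fun t ht => by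
      rw [Set.uIcc_of_le (by linarith)] at ht
      exact ⟨by linarith [ht.1], ht.2⟩),
    eval_right x x (x + 1/2) n4 (fun t ht => by
      rw [Set.uIcc_of_le (by linarith)] at ht
      exact ⟨ht.1, ht.2⟩)]
  rw [show (-ε) / (x - 1/2) = (-ε) / (-(1/2 - x)) by ring_nf, div_neg, neg_div, neg_neg,
    Real.log_div (ne_of_gt hε) (ne_of_gt (by linarith)),
    Real.log_div hx0.ne' hε.ne', Real.log_div (ne_of_gt (by linarith)) hx0.ne']
  have : Real.log (1/2 - x) = Real.log (x - 1/2) := by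
    rw [show x - 1/2 = -(1/2 - x) by ring, Real.log_neg_eq_log]
  rw [this]
  unfold gfun
  ring

lemma caseB (ε : ℝ) (hε : 0 < ε) (h1 : ε < 1/2) :
    ∫ t in {t : ℝ | ε ≤ |t|}, Ftri (1/2 - t) / t = 4 * gfun (1/2) - 4 * ε := by
  rw [reduce (1/2) ε hε h1 (by linarith)]
  have n3 : (0:ℝ) ∉ Set.uIcc ε (1/2:ℝ) := by
    rw [Set.uIcc_of_le (by linarith)]; intro h; simp only [Set.mem_Icc] at h; linarith
  have n4 : (0:ℝ) ∉ Set.uIcc (1/2:ℝ) (1/2 + 1/2 : ℝ) := by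
    rw [Set.uIcc_of_le (by linarith)]; intro h; simp only [Set.mem_Icc] at h; linarith
  rw [f_zero_int (1/2) (-1) (-ε) (fun t ht => by
      rw [Set.uIcc_of_le (by linarith)] at ht
      exact f_zero_left (1/2) t (by simp only [Set.mem_Icc] at ht; linarith [ht.2])),
    ← intervalIntegral.integral_add_adjacent_intervals (f_ii (1/2) ε (1/2) n3)
      (f_ii (1/2) (1/2) (1/2 + 1/2) n4),
    eval_left (1/2) ε (1/2) n3 (fun t ht => by
      rw [Set.uIcc_of_le (by linarith)] at ht
      exact ⟨by linarith [ht.1], ht.2⟩),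
    eval_right (1/2) (1/2) (1/2 + 1/2) n4 (fun t ht => by
      rw [Set.uIcc_of_le (by linarith)] at ht
      exact ⟨ht.1, ht.2⟩)]
  have e1 : ((1:ℝ)/2 + 1/2) / (1/2) = 2 := by norm_num
  rw [e1]
  have e2 : Real.log 2 = - Real.log (1/2) := by
    rw [show (1:ℝ)/2 = 2⁻¹ by norm_num, Real.log_inv]; ring
  unfold gfun
  rw [e2]
  norm_num [Real.log_one]
  ring

lemma caseA (x ε : ℝ) (hx : 1/2 < x) (hε : 0 < ε) (h1 : ε < x - 1/2) (h2 : ε < 1) :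
    ∫ t in {t : ℝ | ε ≤ |t|}, Ftri (x - t) / t = 4 * gfun x := by
  rw [reduce x ε hε (by linarith) h2]
  have hB : 0 < x - 1/2 := by linarith
  have n1 : (0:ℝ) ∉ Set.uIcc ε (x - 1/2) := by
    rw [Set.uIcc_of_le (by linarith)]; intro h; simp only [Set.mem_Icc] at h; linarith
  have n2 : (0:ℝ) ∉ Set.uIcc (x - 1/2) x := by
    rw [Set.uIcc_of_le (by linarith)]; intro h; simp only [Set.mem_Icc] at h; linarith
  have n3 : (0:ℝ) ∉ Set.uIcc x (x + 1/2) := by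
    rw [Set.uIcc_of_le (by linarith)]; intro h; simp only [Set.mem_Icc] at h; linarith
  rw [f_zero_int x (-1) (-ε) (fun t ht => by
      rw [Set.uIcc_of_le (by linarith)] at ht
      exact f_zero_left x t (by simp only [Set.mem_Icc] at ht; linarith [ht.2])),
    ← intervalIntegral.integral_add_adjacent_intervals (f_ii x ε (x - 1/2) n1)
      (f_ii x (x - 1/2) (x + 1/2) (by
        rw [Set.uIcc_of_le (by linarith)]; intro h; simp only [Set.mem_Icc] at h; linarith)),
    ← intervalIntegral.integral_add_adjacent_intervals (f_ii x (x - 1/2) x n2)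
      (f_ii x x (x + 1/2) n3),
    f_zero_int x ε (x - 1/2) (fun t ht => by
      rw [Set.uIcc_of_le (by linarith)] at ht
      exact f_zero_left x t ht.2),
    eval_left x (x - 1/2) x n2 (fun t ht => by
      rw [Set.uIcc_of_le (by linarith)] at ht
      exact ⟨ht.1, ht.2⟩),
    eval_right x x (x + 1/2) n3 (fun t ht => by
      rw [Set.uIcc_of_le (by linarith)] at ht
      exact ⟨ht.1, ht.2⟩),
    Real.log_div (ne_of_gt (by linarith)) hB.ne',
    Real.log_div (ne_of_gt (by linarith)) (ne_of_gt (by linarith))]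
  unfold gfun
  ring

lemma gfun_cont : Continuous gfun := by
  have h : Continuous (fun t : ℝ => t * Real.log t) := Real.continuous_mul_log
  have h1 : Continuous (fun x : ℝ => (x + 1/2) * Real.log (x + 1/2)) := h.comp (by continuity)
  have h2 : Continuous (fun x : ℝ => (x - 1/2) * Real.log (x - 1/2)) := h.comp (by continuity)
  have h3 : Continuous fun x : ℝ => (2:ℝ) * (x * Real.log x) := continuous_const.mul h
  have := (h1.add h2).sub h3
  unfold gfun
  convert this using 1
  funext y; simp only [Pi.add_apply, Pi.sub_apply]; ring

lemma gfun_hasDeriv (x : ℝ) (h1 : x + 1/2 ≠ 0) (h2 : x - 1/2 ≠ 0) (h0 : x ≠ 0) :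
    HasDerivAt gfun (Real.log (x + 1/2) + Real.log (x - 1/2) - 2 * Real.log x) x := by
  have d1 : HasDerivAt (fun x : ℝ => (x + 1/2) * Real.log (x + 1/2))
      (Real.log (x + 1/2) + 1) x := by
    have := (Real.hasDerivAt_mul_log h1).comp x ((hasDerivAt_id x).add_const (1/2))
    simpa [Function.comp_def] using this
  have d2 : HasDerivAt (fun x : ℝ => (x - 1/2) * Real.log (x - 1/2))
      (Real.log (x - 1/2) + 1) x := by
    have := (Real.hasDerivAt_mul_log h2).comp x ((hasDerivAt_id x).sub_const (1/2))
    simpa [Function.comp_def] using this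
  have d3 : HasDerivAt (fun x : ℝ => 2 * (x * Real.log x))
      (2 * (Real.log x + 1)) x := (Real.hasDerivAt_mul_log h0).const_mul 2
  have h := (d1.add d2).sub d3
  have e : gfun = fun x : ℝ => ((x + 1/2) * Real.log (x + 1/2)
      + (x - 1/2) * Real.log (x - 1/2)) - 2 * (x * Real.log x) := by
    funext y; unfold gfun; ring
  rw [e]
  exact h.congr_deriv (by ring)

noncomputable def aval : ℝ := 1 / (2 * Real.sqrt 2)

lemma sqrt2_pos : (0:ℝ) < Real.sqrt 2 := Real.sqrt_pos.mpr (by norm_num)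
lemma sqrt2_sq : Real.sqrt 2 ^ 2 = 2 := Real.sq_sqrt (by norm_num)
lemma sqrt2_lt : Real.sqrt 2 < 2 := by
  nlinarith [sqrt2_sq, sqrt2_pos]
lemma sqrt2_gt : 1 < Real.sqrt 2 := by
  nlinarith [sqrt2_sq, sqrt2_pos]

lemma aval_pos : 0 < aval := by
  unfold aval; positivity

lemma aval_lt : aval < 1/2 := by
  unfold aval
  rw [div_lt_div_iff₀ (by positivity) (by norm_num)]
  nlinarith [sqrt2_gt]

lemma aval_sq : aval ^ 2 = 1/8 := by
  unfold aval
  rw [div_pow, mul_pow, sqrt2_sq]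
  norm_num

-- derivative sign
lemma deriv_sign_lt (x : ℝ) (hx0 : 0 < x) (hxa : x < 1/2) (h : x ^ 2 < 1/8) :
    0 < Real.log (x + 1/2) + Real.log (x - 1/2) - 2 * Real.log x := by
  have e1 : Real.log (x - 1/2) = Real.log (1/2 - x) := by
    rw [show x - 1/2 = -(1/2 - x) by ring, Real.log_neg_eq_log]
  rw [e1, ← Real.log_mul (ne_of_gt (by linarith)) (ne_of_gt (by linarith : (0:ℝ) < 1/2 - x)),
    show 2 * Real.log x = Real.log (x ^ 2) by rw [Real.log_pow]; push_cast; ring]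
  apply sub_pos.mpr
  apply Real.log_lt_log (by positivity)
  nlinarith

lemma deriv_sign_gt (x : ℝ) (hx0 : 0 < x) (hxa : 1/8 < x ^ 2) (hx1 : x < 1/2) :
    Real.log (x + 1/2) + Real.log (x - 1/2) - 2 * Real.log x < 0 := by
  have e1 : Real.log (x - 1/2) = Real.log (1/2 - x) := by
    rw [show x - 1/2 = -(1/2 - x) by ring, Real.log_neg_eq_log]
  rw [e1, ← Real.log_mul (ne_of_gt (by linarith)) (ne_of_gt (by linarith : (0:ℝ) < 1/2 - x)),
    show 2 * Real.log x = Real.log (x ^ 2) by rw [Real.log_pow]; push_cast; ring]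
  apply sub_neg.mpr
  apply Real.log_lt_log (by nlinarith)
  nlinarith

lemma deriv_sign_far (x : ℝ) (hx : 1/2 < x) :
    Real.log (x + 1/2) + Real.log (x - 1/2) - 2 * Real.log x < 0 := by
  rw [← Real.log_mul (ne_of_gt (by linarith)) (ne_of_gt (by linarith : (0:ℝ) < x - 1/2)),
    show 2 * Real.log x = Real.log (x ^ 2) by rw [Real.log_pow]; push_cast; ring]
  apply sub_neg.mpr
  apply Real.log_lt_log (by nlinarith)
  nlinarith

lemma gfun_mono : StrictMonoOn gfun (Set.Icc 0 aval) := by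
  apply strictMonoOn_of_deriv_pos (convex_Icc _ _) gfun_cont.continuousOn
  intro x hx
  rw [interior_Icc, Set.mem_Ioo] at hx
  obtain ⟨h0, ha⟩ := hx
  have hlt : x < 1/2 := lt_trans ha aval_lt
  have hsq : x ^ 2 < 1/8 := by
    have := aval_sq
    nlinarith [aval_pos]
  rw [(gfun_hasDeriv x (by linarith) (by linarith) (by linarith)).deriv]
  exact deriv_sign_lt x h0 hlt hsq

lemma gfun_anti1 : StrictAntiOn gfun (Set.Icc aval (1/2)) := by
  apply strictAntiOn_of_deriv_neg (convex_Icc _ _) gfun_cont.continuousOn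
  intro x hx
  rw [interior_Icc, Set.mem_Ioo] at hx
  obtain ⟨h0, ha⟩ := hx
  have hx0 : 0 < x := lt_trans aval_pos h0
  have hsq : 1/8 < x ^ 2 := by
    have := aval_sq
    nlinarith [aval_pos]
  rw [(gfun_hasDeriv x (by linarith) (by linarith) (by linarith)).deriv]
  exact deriv_sign_gt x hx0 hsq ha

lemma gfun_anti2 : StrictAntiOn gfun (Set.Ici (1/2 : ℝ)) := by
  apply strictAntiOn_of_deriv_neg (convex_Ici _) gfun_cont.continuousOn
  intro x hx
  rw [interior_Ici, Set.mem_Ioi] at hx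
  rw [(gfun_hasDeriv x (by linarith) (by linarith) (by linarith)).deriv]
  exact deriv_sign_far x hx

lemma gfun_zero : gfun 0 = 0 := by
  unfold gfun
  have : Real.log (0 - 1/2) = Real.log (0 + 1/2) := by
    rw [show (0:ℝ) - 1/2 = -(0 + 1/2) by ring, Real.log_neg_eq_log]
  rw [this]
  ring

-- nonnegativity on [1/2, ∞) by convexity of x log x
lemma gfun_nonneg_far (x : ℝ) (hx : 1/2 ≤ x) : 0 ≤ gfun x := by
  have hcvx := Real.convexOn_mul_log
  have h := hcvx.2 (Set.mem_Ici.mpr (by linarith : (0:ℝ) ≤ x - 1/2))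
    (Set.mem_Ici.mpr (by linarith : (0:ℝ) ≤ x + 1/2))
    (by norm_num : (0:ℝ) ≤ (1/2:ℝ)) (by norm_num : (0:ℝ) ≤ (1/2:ℝ)) (by norm_num)
  simp only [smul_eq_mul] at h
  have e : (1/2 : ℝ) * (x - 1/2) + (1/2 : ℝ) * (x + 1/2) = x := by ring
  rw [e] at h
  unfold gfun
  nlinarith [h]

lemma gfun_max (x : ℝ) (hx : 0 ≤ x) : gfun x ≤ gfun aval := by
  rcases le_or_gt x aval with h | h
  · exact gfun_mono.monotoneOn (Set.mem_Icc.mpr ⟨hx, h⟩)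
      (Set.mem_Icc.mpr ⟨aval_pos.le, le_refl _⟩) h
  · rcases le_or_gt x (1/2) with h2 | h2
    · exact le_of_lt (gfun_anti1 (Set.mem_Icc.mpr ⟨le_refl _, aval_lt.le⟩)
        (Set.mem_Icc.mpr ⟨h.le, h2⟩) h)
    · have s1 : gfun x ≤ gfun (1/2) :=
        (gfun_anti2.antitoneOn (Set.mem_Ici.mpr (le_refl _))
          (Set.mem_Ici.mpr (by linarith)) (by linarith))
      have s2 : gfun (1/2) < gfun aval :=
        gfun_anti1 (Set.mem_Icc.mpr ⟨le_refl _, aval_lt.le⟩)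
          (Set.mem_Icc.mpr ⟨aval_lt.le, le_refl _⟩) aval_lt
      linarith

lemma gfun_nonneg (x : ℝ) (hx : 0 ≤ x) : 0 ≤ gfun x := by
  rcases le_or_gt x aval with h | h
  · rw [← gfun_zero]
    exact gfun_mono.monotoneOn (Set.mem_Icc.mpr ⟨le_refl _, aval_pos.le⟩)
      (Set.mem_Icc.mpr ⟨hx, h⟩) hx
  · rcases le_or_gt x (1/2) with h2 | h2
    · have : gfun (1/2) ≤ gfun x := gfun_anti1.antitoneOn
        (Set.mem_Icc.mpr ⟨h.le, h2⟩) (Set.mem_Icc.mpr ⟨aval_lt.le, le_refl _⟩) h2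
      have := gfun_nonneg_far (1/2) (le_refl _)
      linarith
    · exact gfun_nonneg_far x (by linarith)

lemma gfun_aval : gfun aval = Real.log (1 + Real.sqrt 2) := by
  have hs := sqrt2_pos
  have h2 : Real.sqrt 2 ^ 2 = 2 := sqrt2_sq
  have ha : aval + 1/2 = aval * (1 + Real.sqrt 2) := by
    unfold aval
    field_simp
  have hb : aval - 1/2 = -(aval * (Real.sqrt 2 - 1)) := by
    unfold aval
    field_simp
    nlinarith
  have hinv : Real.sqrt 2 - 1 = (1 + Real.sqrt 2)⁻¹ :=
    eq_inv_of_mul_eq_one_left (by nlinarith)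
  have hlog : Real.log (Real.sqrt 2 - 1) = - Real.log (1 + Real.sqrt 2) := by
    rw [hinv, Real.log_inv]
  have h2as : 2 * aval * Real.sqrt 2 = 1 := by
    unfold aval; field_simp
  unfold gfun
  rw [ha, hb, Real.log_neg_eq_log, Real.log_mul aval_pos.ne' (by positivity),
    Real.log_mul aval_pos.ne' (by nlinarith [sqrt2_gt] : Real.sqrt 2 - 1 ≠ 0), hlog]
  linear_combination Real.log (1 + Real.sqrt 2) * h2as



lemma pv_pos (x : ℝ) (hx : 0 < x) : pvHilbAt Ftri x ((1 / Real.pi) * (4 * gfun x)) := by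
  obtain ⟨δ, hδ, c, hc⟩ : ∃ δ > 0, ∃ c : ℝ, ∀ ε ∈ Set.Ioo (0:ℝ) δ,
      ∫ t in {t : ℝ | ε ≤ |t|}, Ftri (x - t) / t = 4 * gfun x - c * ε := by
    rcases lt_trichotomy x (1/2) with h | h | h
    · exact ⟨min x (1/2 - x), lt_min hx (by linarith), 8, fun ε hε =>
        caseC x ε hx h hε.1 (lt_of_lt_of_le hε.2 (min_le_left _ _))
          (lt_of_lt_of_le hε.2 (min_le_right _ _))⟩
    · subst h
      exact ⟨1/2, by norm_num, 4, fun ε hε => caseB ε hε.1 hε.2⟩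
    · exact ⟨min (x - 1/2) 1, lt_min (by linarith) one_pos, 0, fun ε hε => by
        rw [caseA x ε h hε.1 (lt_of_lt_of_le hε.2 (min_le_left _ _))
          (lt_of_lt_of_le hε.2 (min_le_right _ _))]
        ring⟩
  unfold pvHilbAt
  apply Tendsto.congr' (f₁ := fun ε : ℝ => (1 / Real.pi) * (4 * gfun x - c * ε))
  · filter_upwards [Ioo_mem_nhdsGT_of_mem (Set.mem_Ico.mpr ⟨le_refl (0:ℝ), hδ⟩)] with ε hε
    rw [hc ε hε]
  · have hcont : Continuous fun ε : ℝ => (1 / Real.pi) * (4 * gfun x - c * ε) := by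
      fun_prop
    have h2 : Tendsto (fun ε : ℝ => (1 / Real.pi) * (4 * gfun x - c * ε))
        (nhdsWithin 0 (Set.Ioi 0)) (nhds ((1 / Real.pi) * (4 * gfun x - c * 0))) :=
      (hcont.tendsto 0).mono_left (nhdsWithin_le_nhds (s := Set.Ioi (0:ℝ)))
    simpa using h2

/-! ### odd symmetry -/

lemma pv_neg_of (x L : ℝ) (h : pvHilbAt Ftri x L) : pvHilbAt Ftri (-x) (-L) := by
  unfold pvHilbAt at *
  have key : ∀ ε : ℝ,
      (∫ t in {t : ℝ | ε ≤ |t|}, Ftri (-x - t) / t)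
        = -∫ t in {t : ℝ | ε ≤ |t|}, Ftri (x - t) / t := by
    intro ε
    have hS : MeasurableSet {t : ℝ | ε ≤ |t|} :=
      (isClosed_le continuous_const continuous_abs).measurableSet
    have e : Set.indicator {t : ℝ | ε ≤ |t|} (fun t => Ftri (-x - t) / t)
        = fun t => (Set.indicator {t : ℝ | ε ≤ |t|} (fun t => -(Ftri (x - t) / t))) (-t) := by
      funext t
      by_cases ht : t ∈ {t : ℝ | ε ≤ |t|}
      · have ht' : -t ∈ {t : ℝ | ε ≤ |t|} := by
          simp only [Set.mem_setOf_eq, abs_neg] at *; exact ht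
        rw [Set.indicator_of_mem ht, Set.indicator_of_mem ht']
        have : Ftri (-x - t) = Ftri (x - -t) := by
          rw [show -x - t = -(x - -t) by ring, Ftri_even]
        rw [this]
        field_simp
      · have ht' : -t ∉ {t : ℝ | ε ≤ |t|} := by
          simp only [Set.mem_setOf_eq, abs_neg] at *; exact ht
        rw [Set.indicator_of_notMem ht, Set.indicator_of_notMem ht']
    calc ∫ t in {t : ℝ | ε ≤ |t|}, Ftri (-x - t) / t
        = ∫ t, Set.indicator {t : ℝ | ε ≤ |t|} (fun t => Ftri (-x - t) / t) t :=
          (integral_indicator hS).symm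
      _ = ∫ t, (Set.indicator {t : ℝ | ε ≤ |t|} (fun t => -(Ftri (x - t) / t))) (-t) := by
          rw [e]
      _ = ∫ t, (Set.indicator {t : ℝ | ε ≤ |t|} (fun t => -(Ftri (x - t) / t))) t :=
          integral_neg_eq_self _ _
      _ = ∫ t in {t : ℝ | ε ≤ |t|}, -(Ftri (x - t) / t) := integral_indicator hS
      _ = -∫ t in {t : ℝ | ε ≤ |t|}, Ftri (x - t) / t := integral_neg _
  have := h.neg
  apply Tendsto.congr _ this
  intro ε
  rw [key ε]
  ring

/-- The global maximum of `𝓗(F_▲)` on `(0,∞)` is attained at `x = 1/(2√2)`, and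
`‖𝓗(F_▲)‖_{L∞(ℝ)} = 𝓗(F_▲)(1/(2√2)) = (4/π)·log(1 + √2)`. -/
theorem stmt12 (G : ℝ → ℝ) (hG : ∀ x : ℝ, pvHilbAt Ftri x (G x)) :
    (∀ x : ℝ, 0 < x → G x ≤ G (1 / (2 * Real.sqrt 2))) ∧
    G (1 / (2 * Real.sqrt 2)) = 4 / Real.pi * Real.log (1 + Real.sqrt 2) ∧
    (⨆ x : ℝ, |G x|) = 4 / Real.pi * Real.log (1 + Real.sqrt 2) := by
  have hπ : 0 < Real.pi := Real.pi_pos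
  have hpos : ∀ x : ℝ, 0 < x → G x = (1 / Real.pi) * (4 * gfun x) := fun x hx =>
    tendsto_nhds_unique (hG x) (pv_pos x hx)
  have haG : G (1 / (2 * Real.sqrt 2)) = 4 / Real.pi * Real.log (1 + Real.sqrt 2) := by
    rw [show (1 / (2 * Real.sqrt 2)) = aval from rfl, hpos aval aval_pos, gfun_aval]
    ring
  have hL0 : 0 < Real.log (1 + Real.sqrt 2) := Real.log_pos (by linarith [sqrt2_gt])
  have hM0 : 0 ≤ 4 / Real.pi * Real.log (1 + Real.sqrt 2) := by positivity
  have hzero : G 0 = 0 := by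
    have h2 := pv_neg_of 0 (G 0) (hG 0)
    rw [neg_zero] at h2
    have := tendsto_nhds_unique (hG 0) h2
    linarith
  have hbound : ∀ x : ℝ, |G x| ≤ 4 / Real.pi * Real.log (1 + Real.sqrt 2) := by
    have hbp : ∀ x : ℝ, 0 < x → |G x| ≤ 4 / Real.pi * Real.log (1 + Real.sqrt 2) := by
      intro x hx
      rw [hpos x hx, abs_of_nonneg (by
        have := gfun_nonneg x hx.le
        positivity)]
      have hgm := gfun_max x hx.le
      rw [gfun_aval] at hgm
      have h4 : (0:ℝ) < 4 / Real.pi := by positivity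
      calc (1 / Real.pi) * (4 * gfun x) = 4 / Real.pi * gfun x := by ring
        _ ≤ 4 / Real.pi * Real.log (1 + Real.sqrt 2) := by nlinarith
    intro x
    rcases lt_trichotomy x 0 with h | h | h
    · have h2 := pv_neg_of (-x) (G (-x)) (hG (-x))
      rw [neg_neg] at h2
      have hx : G x = -G (-x) := tendsto_nhds_unique (hG x) h2
      rw [hx, abs_neg]
      exact hbp (-x) (by linarith)
    · rw [h, hzero]
      simpa using hM0
    · exact hbp x h
  refine ⟨?_, haG, ?_⟩
  · intro x hx
    rw [hpos x hx, show (1 / (2 * Real.sqrt 2)) = aval from rfl, hpos aval aval_pos]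
    have := gfun_max x hx.le
    have h14 : (0:ℝ) ≤ 1 / Real.pi := by positivity
    nlinarith
  · apply le_antisymm
    · exact ciSup_le hbound
    · have hb : BddAbove (Set.range fun x : ℝ => |G x|) :=
        ⟨4 / Real.pi * Real.log (1 + Real.sqrt 2), by rintro _ ⟨x, rfl⟩; exact hbound x⟩
      have := le_ciSup hb (1 / (2 * Real.sqrt 2))
      rw [haG, abs_of_nonneg hM0] at this
      exact this
end

section
/- One has ∫₀¹ log⁺|e^{2πiθ} − 1| dθ = (3√3/(4π))·L(2, χ₃), where log⁺ x = max(log x, 0), χ₃ is the nontrivial Dirichlet character modulo 3 (χ₃(n) = 1 if n ≡ 1 (mod 3), χ₃(n) = −1 if n ≡ 2 (mod 3), χ₃(n) = 0 if 3 | n), and L(2, χ₃) = Σ_{n≥1} χ₃(n)/n². Consequently, for P(z) = (z−1)^N one has h(P) = N·(3√3/(4π))·L(2, χ₃). -/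
open MeasureTheory Real Filter

/-- The nontrivial Dirichlet character modulo 3. -/
noncomputable def chi3 (n : ℕ) : ℝ :=
  if n % 3 = 1 then 1 else if n % 3 = 2 then -1 else 0

/-- `L(2, χ₃) = Σ_{n≥1} χ₃(n)/n²`. -/
noncomputable def L2chi3 : ℝ := ∑' n : ℕ, chi3 n / (n : ℝ) ^ 2



lemma summable_of_le_one_div_sq {f : ℕ → ℝ} (h : ∀ n, |f n| ≤ 1 / (n:ℝ)^2) :
    Summable f := by
  refine Summable.of_norm_bounded ?_ h
  exact summable_one_div_nat_pow.mpr one_lt_two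

lemma abs_chi3_le (n : ℕ) : |chi3 n| ≤ 1 := by
  unfold chi3; split_ifs <;> norm_num

lemma chi3_zero_mod (n : ℕ) (h : n % 3 = 0) : chi3 n = 0 := by
  unfold chi3; rw [h]; norm_num

lemma div_sq_le (a : ℝ) (n : ℕ) (h : |a| ≤ 1) : |a / (n:ℝ)^2| ≤ 1 / (n:ℝ)^2 := by
  rw [abs_div, abs_pow, Nat.abs_cast]
  rcases Nat.eq_zero_or_pos n with rfl | hn
  · norm_num
  · exact div_le_div_of_nonneg_right h (by positivity) |>.trans_eq rfl

lemma summable_chi3 : Summable (fun n : ℕ => chi3 n / (n:ℝ)^2) :=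
  summable_of_le_one_div_sq fun n => div_sq_le _ n (abs_chi3_le n)

/-- the auxiliary even-part function -/
noncomputable def ePart (n : ℕ) : ℝ :=
  if n % 2 = 0 then chi3 (n / 2) / (n:ℝ)^2 else 0

lemma abs_ePart_le (n : ℕ) : |ePart n| ≤ 1 / (n:ℝ)^2 := by
  unfold ePart; split_ifs
  · exact div_sq_le _ n (abs_chi3_le _)
  · rw [abs_zero]; positivity

lemma summable_ePart : Summable ePart := summable_of_le_one_div_sq abs_ePart_le

lemma tsum_ePart : ∑' n, ePart n = L2chi3 / 4 := by
  have hinj : Function.Injective (fun m : ℕ => 2 * m) := fun a b h => by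
    simp only [] at h; omega
  have hsupp : Function.support ePart ⊆ Set.range (fun m : ℕ => 2 * m) := by
    intro n hn
    rcases Nat.even_or_odd n with ⟨m, hm⟩ | ⟨m, hm⟩
    · exact ⟨m, show 2 * m = n by omega⟩
    · exfalso; apply hn; unfold ePart; rw [if_neg (by omega)]
  have h := hinj.tsum_eq hsupp
  rw [← h]
  have : ∀ m : ℕ, ePart (2 * m) = (chi3 m / (m:ℝ)^2) / 4 := by
    intro m
    unfold ePart
    rw [if_pos (by omega)]
    have : (2 * m) / 2 = m := by omega
    rw [this]
    have h4 : ((2 * m : ℕ) : ℝ) ^ 2 = (m:ℝ)^2 * 4 := by push_cast; ring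
    rw [h4, ← div_div]
  simp only [this]
  rw [tsum_div_const, L2chi3]

lemma sin_pi_n_div_three (n : ℕ) :
    Real.sin (π * n / 3) = Real.sqrt 3 / 2 *
      (chi3 n + 2 * (if n % 2 = 0 then chi3 (n / 2) else 0)) := by
  have hq : (n : ℝ) = (n % 6 : ℕ) + (n / 6 : ℕ) * 6 := by
    exact_mod_cast congrArg (Nat.cast : ℕ → ℝ) (Nat.mod_add_div' n 6).symm
  have key : Real.sin (π * n / 3) = Real.sin (π * (n % 6 : ℕ) / 3) := by
    rw [hq]
    have : π * ((n % 6 : ℕ) + (n / 6 : ℕ) * 6) / 3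
        = π * (n % 6 : ℕ) / 3 + (n / 6 : ℕ) * (2 * π) := by ring
    rw [this, Real.sin_add_nat_mul_two_pi]
  rw [key]
  have h6 : n % 6 = 0 ∨ n % 6 = 1 ∨ n % 6 = 2 ∨ n % 6 = 3 ∨ n % 6 = 4 ∨ n % 6 = 5 := by omega
  have s1 : Real.sin (π * 1 / 3) = Real.sqrt 3 / 2 := by
    rw [show π * 1 / 3 = π / 3 by ring, Real.sin_pi_div_three]
  have s2 : Real.sin (π * 2 / 3) = Real.sqrt 3 / 2 := by
    rw [show π * 2 / 3 = π - π / 3 by ring, Real.sin_pi_sub, Real.sin_pi_div_three]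
  have s3 : Real.sin (π * 3 / 3) = 0 := by
    rw [show π * 3 / 3 = π by ring, Real.sin_pi]
  have s4 : Real.sin (π * 4 / 3) = -(Real.sqrt 3 / 2) := by
    rw [show π * 4 / 3 = π / 3 + π by ring, Real.sin_add_pi, Real.sin_pi_div_three]
  have s5 : Real.sin (π * 5 / 3) = -(Real.sqrt 3 / 2) := by
    rw [show π * 5 / 3 = -(π/3) + 1 * (2 * π) by ring]
    rw [show (1 : ℝ) = ((1:ℕ) : ℝ) by norm_num, Real.sin_add_nat_mul_two_pi, Real.sin_neg,
      Real.sin_pi_div_three]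
  unfold chi3
  rcases h6 with h | h | h | h | h | h <;> rw [h] <;> push_cast
  · rw [if_neg (show ¬ n%3 = 1 by omega), if_neg (show ¬ n%3 = 2 by omega),
      if_pos (show n%2 = 0 by omega), if_neg (show ¬ n/2%3 = 1 by omega),
      if_neg (show ¬ n/2%3 = 2 by omega)]
    simp
  · rw [s1, if_pos (show n%3 = 1 by omega), if_neg (show ¬ n%2 = 0 by omega)]
    ring
  · rw [s2, if_neg (show ¬ n%3 = 1 by omega), if_pos (show n%3 = 2 by omega),
      if_pos (show n%2 = 0 by omega), if_pos (show n/2%3 = 1 by omega)]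
    ring
  · rw [s3, if_neg (show ¬ n%3 = 1 by omega), if_neg (show ¬ n%3 = 2 by omega),
      if_neg (show ¬ n%2 = 0 by omega)]
    ring
  · rw [s4, if_pos (show n%3 = 1 by omega), if_pos (show n%2 = 0 by omega),
      if_neg (show ¬ n/2%3 = 1 by omega), if_pos (show n/2%3 = 2 by omega)]
    ring
  · rw [s5, if_neg (show ¬ n%3 = 1 by omega), if_pos (show n%3 = 2 by omega),
      if_neg (show ¬ n%2 = 0 by omega)]
    ring

noncomputable def clSum : ℝ := ∑' n : ℕ, Real.sin (π * n / 3) / (n:ℝ)^2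

lemma summable_sin_div_sq : Summable (fun n : ℕ => Real.sin (π * n / 3) / (n:ℝ)^2) :=
  summable_of_le_one_div_sq fun n => div_sq_le _ n (abs_sin_le_one _)

lemma clSum_eq : clSum = 3 * Real.sqrt 3 / 4 * L2chi3 := by
  have hpt : ∀ n : ℕ, Real.sin (π * n / 3) / (n:ℝ)^2
      = Real.sqrt 3 / 2 * (chi3 n / (n:ℝ)^2 + 2 * ePart n) := by
    intro n
    rw [sin_pi_n_div_three]
    unfold ePart
    split_ifs with h
    · field_simp
    · field_simp
      ring
  unfold clSum
  simp only [hpt]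
  rw [tsum_mul_left, Summable.tsum_add summable_chi3 (summable_ePart.mul_left 2),
    tsum_mul_left, tsum_ePart, ← L2chi3]
  ring

noncomputable def cpt (t : ℝ) : ℂ := Complex.exp (2 * π * Complex.I * t)

lemma abs_cpt (t : ℝ) : ‖cpt t‖ = 1 := by
  unfold cpt
  rw [Complex.norm_exp]
  norm_num [Complex.mul_re, Complex.mul_im]

lemma cpt_sub_one (t : ℝ) :
    cpt t - 1 = Complex.exp (π * t * Complex.I) * (2 * Complex.I * Complex.sin (π * t)) := by
  rw [Complex.sin]
  have h1 : cpt t = Complex.exp (π * t * Complex.I) * Complex.exp (π * t * Complex.I) := by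
    unfold cpt; rw [← Complex.exp_add]; ring_nf
  have h2 : Complex.exp (π * t * Complex.I) * Complex.exp (-(π * t * Complex.I)) = 1 := by
    rw [← Complex.exp_add]; simp
  have h3 : Complex.exp (-(↑π * ↑t) * Complex.I) = Complex.exp (-(π * t * Complex.I)) := by
    ring_nf
  rw [h3]
  linear_combination h1 + h2
    - (Complex.exp (↑π * ↑t * Complex.I) * Complex.exp (-(↑π * ↑t * Complex.I))
        - Complex.exp (↑π * ↑t * Complex.I) * Complex.exp (↑π * ↑t * Complex.I)) * Complex.I_mul_I

lemma abs_cpt_sub_one (t : ℝ) :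
    ‖cpt t - 1‖ = 2 * |Real.sin (π * t)| := by
  rw [cpt_sub_one]
  rw [norm_mul, norm_mul, norm_mul, Complex.norm_exp]
  have : ((π : ℂ) * t * Complex.I).re = 0 := by
    simp [Complex.mul_re, Complex.mul_im]
  rw [this]
  have : Complex.sin ((π:ℂ) * t) = ((Real.sin (π * t) : ℝ) : ℂ) := by
    push_cast [Complex.ofReal_sin]
    norm_num
  rw [this, Complex.norm_real, Real.norm_eq_abs]
  simp

lemma sin_ge_half {x : ℝ} (h1 : π/6 ≤ x) (h2 : x ≤ 5*π/6) : 1/2 ≤ Real.sin x := by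
  have hx : sin x = cos (x - π/2) := by
    rw [← Real.cos_pi_div_two_sub, show π/2 - x = -(x - π/2) by ring, Real.cos_neg]
  rw [hx, ← Real.cos_abs]
  calc (1:ℝ)/2 = cos (π/3) := (Real.cos_pi_div_three).symm
    _ ≤ cos |x - π/2| := by
        apply Real.cos_le_cos_of_nonneg_of_le_pi (abs_nonneg _)
        · linarith [Real.pi_pos]
        · rw [abs_le]; constructor <;> [linarith; linarith]

lemma sin_le_half_left {x : ℝ} (h1 : 0 ≤ x) (h2 : x ≤ π/6) : |Real.sin x| ≤ 1/2 := by
  rw [abs_of_nonneg (Real.sin_nonneg_of_nonneg_of_le_pi h1 (by linarith [Real.pi_pos]))]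
  calc Real.sin x ≤ Real.sin (π/6) := by
        apply Real.sin_le_sin_of_le_of_le_pi_div_two (by linarith [Real.pi_pos]) ?_ h2
        linarith [Real.pi_pos]
    _ = 1/2 := Real.sin_pi_div_six

lemma continuous_cpt : Continuous cpt := by
  unfold cpt; fun_prop


lemma hasSum_log_abs_r (r t : ℝ) (h0 : 0 ≤ r) (h1 : r < 1) :
    HasSum (fun n : ℕ => r^n * Real.cos (2*π*n*t) / n)
      (-Real.log (‖1 - (r:ℂ) * cpt t‖)) := by
  have hz : ‖(r:ℂ) * cpt t‖ < 1 := by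
    rw [norm_mul, Complex.norm_real, Real.norm_eq_abs, abs_cpt,
      mul_one, abs_of_nonneg h0]
    exact h1
  have h := Complex.hasSum_re (Complex.hasSum_taylorSeries_neg_log hz)
  rw [Complex.neg_re, Complex.log_re] at h
  convert h using 2 with n
  have hpow : ((r:ℂ) * cpt t)^n / (n:ℂ)
      = ((r^n / n : ℝ) : ℂ) * Complex.exp (((2*π*n*t : ℝ) : ℂ) * Complex.I) := by
    rw [mul_pow]
    have : cpt t ^ n = Complex.exp (((2*π*n*t : ℝ) : ℂ) * Complex.I) := by
      unfold cpt
      rw [← Complex.exp_nat_mul]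
      congr 1
      push_cast
      ring
    rw [this]
    push_cast
    ring
  rw [hpow]
  rw [Complex.re_ofReal_mul, Complex.exp_ofReal_mul_I_re]
  ring

lemma integral_cos_term (n : ℕ) :
    ∫ t in (1/6:ℝ)..(5/6), Real.cos (2*π*n*t)
      = if n = 0 then 2/3 else -(Real.sin (π*n/3) / (π*n)) := by
  rcases Nat.eq_zero_or_pos n with rfl | hn
  · simp; norm_num
  rw [if_neg hn.ne']
  have hc : (2*π*(n:ℝ)) ≠ 0 := by
    have := Real.pi_pos
    positivity
  have hderiv : ∀ t ∈ Set.uIcc (1/6:ℝ) (5/6), HasDerivAt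
      (fun t : ℝ => Real.sin (2*π*n*t) / (2*π*n)) (Real.cos (2*π*n*t)) t := by
    intro t _
    have h1 : HasDerivAt (fun t : ℝ => 2*π*n*t) (2*π*n) t := by
      simpa using (hasDerivAt_id t).const_mul (2*π*(n:ℝ))
    have h2 := (Real.hasDerivAt_sin (2*π*n*t)).comp t h1
    have h3 := h2.div_const (2*π*n)
    convert h3 using 1
    · rfl
    · rfl
    · rfl
    · exact (mul_div_cancel_right₀ _ hc).symm
  have hint : IntervalIntegrable (fun t : ℝ => Real.cos (2*π*n*t)) volume (1/6) (5/6) := by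
    apply Continuous.intervalIntegrable
    fun_prop
  rw [intervalIntegral.integral_eq_sub_of_hasDerivAt hderiv hint]
  have e1 : 2*π*(n:ℝ)*(5/6) = -(π*n/3) + n * (2*π) := by ring
  have e2 : 2*π*(n:ℝ)*(1/6) = π*n/3 := by ring
  rw [e1, e2, Real.sin_add_nat_mul_two_pi, Real.sin_neg]
  have hpn : (π*(n:ℝ)) ≠ 0 := by
    have := Real.pi_pos
    have : (n:ℝ) > 0 := by exact_mod_cast hn
    positivity
  field_simp
  ring

lemma norm_term_le (r t : ℝ) (h0 : 0 ≤ r) (n : ℕ) :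
    ‖-(r^n * Real.cos (2*π*n*t) / n)‖ ≤ r^n := by
  rw [norm_neg, Real.norm_eq_abs]
  rcases Nat.eq_zero_or_pos n with rfl | hn
  · simp
  rw [abs_div, abs_mul, abs_of_nonneg (pow_nonneg h0 n), Nat.abs_cast]
  have h1 : r^n * |Real.cos (2*π*n*t)| ≤ r^n * 1 :=
    mul_le_mul_of_nonneg_left (abs_cos_le_one _) (pow_nonneg h0 n)
  have h2 : (1:ℝ) ≤ (n:ℝ) := by exact_mod_cast hn
  calc r^n * |Real.cos (2*π*n*t)| / n ≤ r^n * 1 / n := by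
        gcongr
    _ ≤ r^n := by
        rw [mul_one]
        exact div_le_self (pow_nonneg h0 n) h2

lemma integral_log_r (r : ℝ) (h0 : 0 ≤ r) (h1 : r < 1) :
    ∫ t in (1/6:ℝ)..(5/6), Real.log (‖1 - (r:ℂ) * cpt t‖)
      = (1/π) * ∑' n : ℕ, r^n * Real.sin (π*n/3) / (n:ℝ)^2 := by
  have hrepr : ∀ t : ℝ, Real.log (‖1 - (r:ℂ) * cpt t‖)
      = ∑' n : ℕ, -(r^n * Real.cos (2*π*n*t) / n) := by
    intro t
    have h := (hasSum_log_abs_r r t h0 h1).neg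
    rw [neg_neg] at h
    exact h.tsum_eq.symm
  have hcont : ∀ n : ℕ, Continuous (fun t : ℝ => -(r^n * Real.cos (2*π*n*t) / n)) := by
    intro n; fun_prop
  have hle : (1/6:ℝ) ≤ 5/6 := by norm_num
  rw [intervalIntegral.integral_of_le hle]
  calc ∫ t in Set.Ioc (1/6:ℝ) (5/6), Real.log (‖1 - (r:ℂ) * cpt t‖)
      = ∫ t in Set.Ioc (1/6:ℝ) (5/6), ∑' n : ℕ, -(r^n * Real.cos (2*π*n*t) / n) := by
        exact setIntegral_congr_fun measurableSet_Ioc fun t _ => hrepr t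
    _ = ∑' n : ℕ, ∫ t in Set.Ioc (1/6:ℝ) (5/6), -(r^n * Real.cos (2*π*n*t) / n) := by
        apply MeasureTheory.integral_tsum
        · exact fun n => (hcont n).aestronglyMeasurable
        · have hb : ∀ n : ℕ, ∫⁻ t in Set.Ioc (1/6:ℝ) (5/6), ‖-(r^n * Real.cos (2*π*n*t) / n)‖ₑ
              ≤ ENNReal.ofReal (r^n) * ENNReal.ofReal (2/3) := by
            intro n
            have hpt : ∀ t : ℝ, (‖-(r^n * Real.cos (2*π*n*t) / n)‖ₑ : ENNReal)
                ≤ ENNReal.ofReal (r^n) := by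
              intro t
              rw [← ofReal_norm]
              exact ENNReal.ofReal_le_ofReal (norm_term_le r t h0 n)
            calc ∫⁻ t in Set.Ioc (1/6:ℝ) (5/6), ‖-(r^n * Real.cos (2*π*n*t) / n)‖ₑ
                ≤ ∫⁻ _ in Set.Ioc (1/6:ℝ) (5/6), ENNReal.ofReal (r^n) :=
                  lintegral_mono fun t => hpt t
              _ = ENNReal.ofReal (r^n) * volume (Set.Ioc (1/6:ℝ) (5/6)) :=
                  setLIntegral_const _ _
              _ = ENNReal.ofReal (r^n) * ENNReal.ofReal (2/3) := by
                  rw [Real.volume_Ioc]; norm_num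
          refine ne_top_of_le_ne_top ?_ (ENNReal.tsum_le_tsum hb)
          rw [ENNReal.tsum_mul_right,
            ← ENNReal.ofReal_tsum_of_nonneg (fun n => pow_nonneg h0 n)
              (summable_geometric_of_lt_one h0 h1)]
          exact ENNReal.mul_ne_top ENNReal.ofReal_ne_top ENNReal.ofReal_ne_top
    _ = ∑' n : ℕ, (1/π) * (r^n * Real.sin (π*n/3) / (n:ℝ)^2) := by
        apply tsum_congr
        intro n
        rw [← intervalIntegral.integral_of_le hle, intervalIntegral.integral_neg]
        have hfac : ∀ x : ℝ, r^n * Real.cos (2*π*n*x) / n = (r^n/n) * Real.cos (2*π*n*x) :=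
          fun x => by ring
        simp only [hfac]
        rw [intervalIntegral.integral_const_mul, integral_cos_term]
        rcases Nat.eq_zero_or_pos n with rfl | hn
        · simp
        rw [if_neg hn.ne']
        have hpi := Real.pi_ne_zero
        have hnn : (n:ℝ) ≠ 0 := by positivity
        field_simp
    _ = (1/π) * ∑' n : ℕ, r^n * Real.sin (π*n/3) / (n:ℝ)^2 := tsum_mul_left



lemma one_le_abs_cpt_sub_one {t : ℝ} (h1 : 1/6 ≤ t) (h2 : t ≤ 5/6) :
    1 ≤ ‖cpt t - 1‖ := by
  rw [abs_cpt_sub_one]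
  have hpi := Real.pi_pos
  have hs : 1/2 ≤ Real.sin (π * t) := by
    apply sin_ge_half <;> nlinarith
  rw [abs_of_nonneg (by linarith)]
  linarith

lemma abs_log_le_log_two {y : ℝ} (h1 : 1/2 ≤ y) (h2 : y ≤ 2) : |Real.log y| ≤ Real.log 2 := by
  rw [abs_le]
  constructor
  · rw [← Real.log_inv]
    apply Real.log_le_log (by norm_num)
    rw [show (2:ℝ)⁻¹ = 1/2 by norm_num]
    exact h1
  · exact Real.log_le_log (by linarith) h2

lemma integral_log_main :
    ∫ t in (1/6:ℝ)..(5/6), Real.log (‖cpt t - 1‖) = (1/π) * clSum := by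
  set r : ℕ → ℝ := fun k => 1 - ((k:ℝ)+2)⁻¹ with hr
  have hk2 : ∀ k : ℕ, (0:ℝ) < (k:ℝ) + 2 := fun k => by positivity
  have hrhalf : ∀ k, 1/2 ≤ r k := by
    intro k
    have : ((k:ℝ)+2)⁻¹ ≤ 2⁻¹ :=
      inv_anti₀ (by norm_num) (by linarith [Nat.cast_nonneg (α := ℝ) k])
    simp only [hr]
    rw [show (1:ℝ)/2 = 1 - 2⁻¹ by norm_num]
    linarith
  have hr0 : ∀ k, 0 ≤ r k := fun k => le_trans (by norm_num) (hrhalf k)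
  have hr1 : ∀ k, r k < 1 := by
    intro k
    have : 0 < ((k:ℝ)+2)⁻¹ := by positivity
    simp only [hr]; linarith
  have hrlim : Tendsto r atTop (nhds 1) := by
    have h1 : Tendsto (fun k : ℕ => ((k:ℝ)+2)) atTop atTop :=
      tendsto_atTop_add_const_right _ 2 tendsto_natCast_atTop_atTop
    have h2 : Tendsto (fun k : ℕ => ((k:ℝ)+2)⁻¹) atTop (nhds 0) := h1.inv_tendsto_atTop
    have h3 := (tendsto_const_nhds (x := (1:ℝ)) (f := atTop (α := ℕ))).sub h2
    simpa using h3
  have habs_cont : ∀ k, Continuous (fun t : ℝ => ‖1 - ((r k : ℝ):ℂ) * cpt t‖) := by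
    intro k
    exact continuous_norm.comp
      (continuous_const.sub (continuous_const.mul continuous_cpt))
  have hlow : ∀ (k : ℕ) (x : ℝ), x ∈ Set.Icc (1/6:ℝ) (5/6) →
      r k ≤ ‖1 - ((r k : ℝ):ℂ) * cpt x‖ := by
    intro k x hx
    have h1 : 1 ≤ ‖cpt x - 1‖ := one_le_abs_cpt_sub_one hx.1 hx.2
    have h2 := norm_sub_norm_le ((1:ℂ) - cpt x) ((1:ℂ) - ((r k : ℝ):ℂ) * cpt x)
    have h3 : ((1:ℂ) - cpt x) - ((1:ℂ) - ((r k : ℝ):ℂ) * cpt x)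
        = (((r k : ℝ):ℂ) - 1) * cpt x := by ring
    rw [h3] at h2
    have h4 : ‖(((r k : ℝ):ℂ) - 1) * cpt x‖ = 1 - r k := by
      rw [norm_mul, abs_cpt, mul_one,
        ← Complex.ofReal_one, ← Complex.ofReal_sub, Complex.norm_real, Real.norm_eq_abs,
        abs_of_nonpos (by linarith [hr1 k])]
      ring
    have h5 : ‖(1:ℂ) - cpt x‖ = ‖cpt x - 1‖ := by
      rw [norm_sub_rev]
    rw [h4, h5] at h2
    linarith
  have hup : ∀ (k : ℕ) (x : ℝ), ‖1 - ((r k : ℝ):ℂ) * cpt x‖ ≤ 2 := by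
    intro k x
    calc ‖(1:ℂ) - ((r k : ℝ):ℂ) * cpt x‖ ≤ ‖(1:ℂ)‖ + ‖((r k : ℝ):ℂ) * cpt x‖ := norm_sub_le _ _
      _ ≤ 2 := by
          rw [norm_one, norm_mul, Complex.norm_real, Real.norm_eq_abs, abs_cpt, mul_one, abs_of_nonneg (hr0 k)]
          linarith [hr1 k]
  have hIoc : Set.uIoc (1/6:ℝ) (5/6) = Set.Ioc (1/6:ℝ) (5/6) :=
    Set.uIoc_of_le (by norm_num)
  have hLHS : Tendsto (fun k => ∫ t in (1/6:ℝ)..(5/6),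
      Real.log (‖1 - ((r k : ℝ):ℂ) * cpt t‖)) atTop
      (nhds (∫ t in (1/6:ℝ)..(5/6), Real.log (‖cpt t - 1‖))) := by
    apply intervalIntegral.tendsto_integral_filter_of_dominated_convergence
      (bound := fun _ => Real.log 2)
    · refine Eventually.of_forall fun k => Continuous.aestronglyMeasurable ?_
      apply (habs_cont k).log
      intro t hcon
      rw [norm_eq_zero, sub_eq_zero] at hcon
      have h1 := congrArg norm hcon
      rw [norm_one, norm_mul, Complex.norm_real, Real.norm_eq_abs, abs_cpt, mul_one,
        abs_of_nonneg (hr0 k)] at h1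
      linarith [hr1 k]
    · refine Eventually.of_forall fun k => Eventually.of_forall fun x hx => ?_
      rw [hIoc] at hx
      have hxI : x ∈ Set.Icc (1/6:ℝ) (5/6) := ⟨hx.1.le, hx.2⟩
      rw [Real.norm_eq_abs]
      exact abs_log_le_log_two (le_trans (hrhalf k) (hlow k x hxI)) (hup k x)
    · exact intervalIntegrable_const
    · refine Eventually.of_forall fun x hx => ?_
      rw [hIoc] at hx
      have hxI : x ∈ Set.Icc (1/6:ℝ) (5/6) := ⟨hx.1.le, hx.2⟩
      have hne : ‖1 - ((1:ℝ):ℂ) * cpt x‖ ≠ 0 := by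
        rw [Complex.ofReal_one, one_mul, norm_sub_rev]
        have := one_le_abs_cpt_sub_one hxI.1 hxI.2
        linarith
      have hcont1 : Continuous (fun s : ℝ => ‖1 - (s:ℂ) * cpt x‖) :=
        continuous_norm.comp
          (continuous_const.sub (Complex.continuous_ofReal.mul continuous_const))
      have hca : ContinuousAt (fun s : ℝ => Real.log (‖1 - (s:ℂ) * cpt x‖)) 1 :=
        (hcont1.continuousAt).log hne
      have := hca.tendsto.comp hrlim
      simp only [Function.comp_def] at this
      convert this using 2
      rw [Complex.ofReal_one, one_mul, norm_sub_rev]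
  -- RHS limit
  have hsummable : Summable (fun n : ℕ => (1:ℝ) / (n:ℝ)^2) := by
    exact summable_of_le_one_div_sq fun n => by rw [abs_div, abs_one, abs_pow, Nat.abs_cast]
  have hRHS : Tendsto (fun k => (1/π) * ∑' n : ℕ, (r k)^n * Real.sin (π*n/3) / (n:ℝ)^2)
      atTop (nhds ((1/π) * clSum)) := by
    apply Tendsto.const_mul
    unfold clSum
    apply tendsto_tsum_of_dominated_convergence (bound := fun n : ℕ => 1 / (n:ℝ)^2) hsummable
    · intro n
      have h1 : Tendsto (fun k => (r k)^n) atTop (nhds 1) := by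
        have := hrlim.pow n
        simpa using this
      have h2 := h1.mul_const (Real.sin (π*n/3) / (n:ℝ)^2)
      rw [one_mul] at h2
      convert h2 using 2
      ring
    · refine Eventually.of_forall fun k => fun n => ?_
      rw [Real.norm_eq_abs, abs_div, abs_mul]
      have hrn : |r k ^ n| ≤ 1 := by
        rw [abs_pow, abs_of_nonneg (hr0 k)]
        exact pow_le_one₀ (hr0 k) (hr1 k).le
      calc |r k ^ n| * |Real.sin (π*n/3)| / |(n:ℝ)^2|
          ≤ 1 * 1 / |(n:ℝ)^2| := by
            gcongr
            exact abs_sin_le_one _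
        _ = 1 / (n:ℝ)^2 := by rw [abs_pow, Nat.abs_cast, one_mul]
  have heq : (fun k => ∫ t in (1/6:ℝ)..(5/6),
      Real.log (‖1 - ((r k : ℝ):ℂ) * cpt t‖))
      = fun k => (1/π) * ∑' n : ℕ, (r k)^n * Real.sin (π*n/3) / (n:ℝ)^2 :=
    funext fun k => integral_log_r (r k) (hr0 k) (hr1 k)
  rw [heq] at hLHS
  exact tendsto_nhds_unique hLHS hRHS

lemma max_log_eq {X : ℝ} (hX : 0 ≤ X) : max (Real.log X) 0 = Real.log (max X 1) := by
  rcases le_or_gt X 1 with h | h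
  · rw [max_eq_right h, Real.log_one, max_eq_right (Real.log_nonpos hX h)]
  · rw [max_eq_left h.le, max_eq_left (Real.log_nonneg h.le)]

lemma abs_cpt_sub_one_le_one_left {t : ℝ} (h1 : 0 ≤ t) (h2 : t ≤ 1/6) :
    ‖cpt t - 1‖ ≤ 1 := by
  rw [abs_cpt_sub_one]
  have hpi := Real.pi_pos
  have := sin_le_half_left (x := π * t) (by nlinarith) (by nlinarith)
  linarith

lemma abs_cpt_sub_one_le_one_right {t : ℝ} (h1 : 5/6 ≤ t) (h2 : t ≤ 1) :
    ‖cpt t - 1‖ ≤ 1 := by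
  rw [abs_cpt_sub_one]
  have hpi := Real.pi_pos
  have h3 : |Real.sin (π * t)| = |Real.sin (π - π * t)| := by rw [Real.sin_pi_sub]
  rw [h3]
  have := sin_le_half_left (x := π - π * t) (by nlinarith) (by nlinarith)
  linarith

noncomputable def Fm (t : ℝ) : ℝ := Real.log (max (‖cpt t - 1‖) 1)

lemma continuous_Fm : Continuous Fm := by
  apply Continuous.log
  · exact (continuous_norm.comp (continuous_cpt.sub continuous_const)).max
      continuous_const
  · intro t
    have : (1:ℝ) ≤ max (‖cpt t - 1‖) 1 := le_max_right _ _
    positivity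

lemma main_integral :
    (∫ t in (0:ℝ)..1, max (Real.log (‖cpt t - 1‖)) 0) = (1/π) * clSum := by
  have hfun : (fun t => max (Real.log (‖cpt t - 1‖)) 0) = Fm :=
    funext fun t => max_log_eq (norm_nonneg _)
  rw [hfun]
  have hint : ∀ a b : ℝ, IntervalIntegrable Fm volume a b :=
    fun a b => continuous_Fm.intervalIntegrable a b
  have hsplit1 := intervalIntegral.integral_add_adjacent_intervals
    (hint 0 (1/6)) (hint (1/6) 1)
  have hsplit2 := intervalIntegral.integral_add_adjacent_intervals
    (hint (1/6) (5/6)) (hint (5/6) 1)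
  have htail1 : (∫ t in (0:ℝ)..(1/6), Fm t) = 0 := by
    have hcg : (∫ t in (0:ℝ)..(1/6), Fm t) = ∫ _ in (0:ℝ)..(1/6), (0:ℝ) := by
      apply intervalIntegral.integral_congr
      intro t ht
      rw [Set.uIcc_of_le (by norm_num : (0:ℝ) ≤ 1/6)] at ht
      unfold Fm
      rw [max_eq_right (abs_cpt_sub_one_le_one_left ht.1 ht.2), Real.log_one]
    rw [hcg, intervalIntegral.integral_zero]
  have htail2 : (∫ t in (5/6:ℝ)..1, Fm t) = 0 := by
    have hcg : (∫ t in (5/6:ℝ)..1, Fm t) = ∫ _ in (5/6:ℝ)..1, (0:ℝ) := by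
      apply intervalIntegral.integral_congr
      intro t ht
      rw [Set.uIcc_of_le (by norm_num : (5/6:ℝ) ≤ 1)] at ht
      unfold Fm
      rw [max_eq_right (abs_cpt_sub_one_le_one_right ht.1 ht.2), Real.log_one]
    rw [hcg, intervalIntegral.integral_zero]
  have hmid : (∫ t in (1/6:ℝ)..(5/6), Fm t)
      = ∫ t in (1/6:ℝ)..(5/6), Real.log (‖cpt t - 1‖) := by
    apply intervalIntegral.integral_congr
    intro t ht
    rw [Set.uIcc_of_le (by norm_num : (1/6:ℝ) ≤ 5/6)] at ht
    unfold Fm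
    rw [max_eq_left (one_le_abs_cpt_sub_one ht.1 ht.2)]
  rw [← hsplit1, ← hsplit2, htail1, htail2, hmid, integral_log_main]
  ring


/-- `∫₀¹ log⁺|e^{2πiθ} − 1| dθ = (3√3/(4π))·L(2, χ₃)`; consequently, for `P(z) = (z−1)^N`
one has `h(P) = N·(3√3/(4π))·L(2, χ₃)`. -/
theorem stmt13 :
    (∫ t in (0:ℝ)..1,
        max (Real.log (‖Complex.exp (2 * Real.pi * Complex.I * t) - 1‖)) 0)
      = 3 * Real.sqrt 3 / (4 * Real.pi) * L2chi3 ∧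
    ∀ N : ℕ,
      (∫ t in (0:ℝ)..1,
          max (Real.log (‖(Complex.exp (2 * Real.pi * Complex.I * t) - 1) ^ N‖ /
            Real.sqrt (‖((0:ℂ) - 1) ^ N‖))) 0)
        = N * (3 * Real.sqrt 3 / (4 * Real.pi) * L2chi3) := by
  have hπ := Real.pi_pos
  have h1 : (∫ t in (0:ℝ)..1, max (Real.log (‖cpt t - 1‖)) 0)
      = 3 * Real.sqrt 3 / (4 * Real.pi) * L2chi3 := by
    rw [main_integral, clSum_eq]
    field_simp
  constructor
  · exact h1
  · intro N
    have h0 : Real.sqrt (‖((0:ℂ) - 1) ^ N‖) = 1 := by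
      rw [norm_pow]
      norm_num
    have hpt : ∀ t : ℝ,
        max (Real.log (‖(cpt t - 1) ^ N‖ /
          Real.sqrt (‖((0:ℂ) - 1) ^ N‖))) 0
        = (N:ℝ) * max (Real.log (‖cpt t - 1‖)) 0 := by
      intro t
      rw [h0, div_one, norm_pow, Real.log_pow]
      rw [mul_max_of_nonneg _ _ (Nat.cast_nonneg N), mul_zero]
    show (∫ t in (0:ℝ)..1,
        max (Real.log (‖(cpt t - 1) ^ N‖ /
          Real.sqrt (‖((0:ℂ) - 1) ^ N‖))) 0)
      = N * (3 * Real.sqrt 3 / (4 * Real.pi) * L2chi3)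
    rw [funext hpt, intervalIntegral.integral_const_mul, h1]
end

section
/- Let 𝔊(x) = 2x/√(1 − 4x²) for |x| < 1/2 and 𝔊(x) = 0 for |x| ≥ 1/2. Then ∫_ℝ |𝔊(x)| dx = 1, and for every x with |x| ≠ 1/2 the principal value limit defining 𝓗(𝔊)(x) exists and equals −1 if |x| < 1/2, and −1 + 2|x|/√(4x² − 1) if |x| > 1/2. -/
open MeasureTheory Filter

/-- The magic odd function `𝔊(x) = 2x/√(1 − 4x²)` for `|x| < 1/2`, and `0` for `|x| ≥ 1/2`. -/
noncomputable def frakG (x : ℝ) : ℝ :=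
  if |x| < 1/2 then 2 * x / Real.sqrt (1 - 4 * x ^ 2) else 0

open Set intervalIntegral

noncomputable def hfun (x u : ℝ) : ℝ := 2*u / ((x - u) * Real.sqrt (1 - 4*u^2))

lemma hfun_meas (x : ℝ) : Measurable (hfun x) := by
  unfold hfun; fun_prop

lemma sqrt_fact {u : ℝ} (h : 0 ≤ 1 + 2*u) :
    Real.sqrt (1 - 4*u^2) = Real.sqrt (1 - 2*u) * Real.sqrt (1 + 2*u) := by
  rw [← Real.sqrt_mul' _ h]; ring_nf

lemma frakG_zero {u : ℝ} (h : ¬ |u| < 1/2) : frakG u = 0 := if_neg h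

lemma frakG_odd (u : ℝ) : frakG (-u) = - frakG u := by
  unfold frakG
  rw [abs_neg]
  by_cases h : |u| < 1/2
  · rw [if_pos h, if_pos h]
    rw [show ((-u)^2 : ℝ) = u^2 by ring]
    rw [show (2 * -u : ℝ) = -(2*u) by ring, neg_div]
  · rw [if_neg h, if_neg h, neg_zero]

lemma frakG_div_eq_hfun {x u : ℝ} (h : |u| ≤ 1/2) : frakG u / (x - u) = hfun x u := by
  unfold frakG hfun
  rcases lt_or_eq_of_le h with h' | h'
  · rw [if_pos h', div_div, mul_comm (Real.sqrt (1 - 4*u^2)) (x - u)]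
  · rw [if_neg (by rw [h']; exact lt_irrefl _)]
    have : (1 - 4*u^2 : ℝ) = 0 := by nlinarith [sq_abs u, h']
    rw [this, Real.sqrt_zero, mul_zero, div_zero, zero_div]

lemma II_rpow_right (a b : ℝ) :
    IntervalIntegrable (fun u : ℝ => (1 - 2*u) ^ (-(1/2) : ℝ)) volume a b := by
  have h0 : IntervalIntegrable (fun v : ℝ => v ^ (-(1/2):ℝ)) volume (1 - 2*a) (1 - 2*b) :=
    intervalIntegrable_rpow' (by norm_num)
  have h1 := h0.comp_sub_left 1
  have h2 := h1.comp_mul_left (c := 2) enorm_ne_top enorm_ne_top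
  simpa using h2

lemma II_right {x a' δ : ℝ} (hδ : 0 < δ) (ha : -(1/2) < a') (hab : a' ≤ 1/2)
    (hd : ∀ u ∈ Icc a' (1/2:ℝ), δ ≤ |x - u|) :
    IntervalIntegrable (hfun x) volume a' (1/2) := by
  have hsa : 0 < Real.sqrt (1 + 2*a') := Real.sqrt_pos.2 (by linarith)
  apply IntervalIntegrable.mono_fun'
    (g := fun u => (δ * Real.sqrt (1 + 2*a'))⁻¹ * (1 - 2*u) ^ (-(1/2) : ℝ))
    ((II_rpow_right a' (1/2)).const_mul _)
    ((hfun_meas x).aestronglyMeasurable.restrict)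
  rw [uIoc_of_le hab]
  filter_upwards [ae_restrict_mem measurableSet_Ioc] with u hu
  obtain ⟨h1, h2⟩ := hu
  have h3 : 0 < 1 + 2*u := by linarith
  have h4 : 0 ≤ 1 - 2*u := by linarith
  have hdu : δ ≤ |x - u| := hd u ⟨le_of_lt h1, h2⟩
  have hs : Real.sqrt (1 - 4*u^2) = Real.sqrt (1 - 2*u) * Real.sqrt (1 + 2*u) :=
    sqrt_fact (le_of_lt h3)
  have hrp : (1 - 2*u) ^ (-(1/2) : ℝ) = (Real.sqrt (1 - 2*u))⁻¹ := by
    rw [Real.rpow_neg h4, Real.sqrt_eq_rpow]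
  rcases eq_or_lt_of_le h2 with he | hlt
  · subst he
    have hz : Real.sqrt (1 - 4*(1/2:ℝ)^2) = 0 := by norm_num
    have hz2 : ((1:ℝ) - 2*(1/2:ℝ)) ^ (-(1/2) : ℝ) = 0 := by norm_num
    unfold hfun
    rw [hz, hz2]
    simp
  · have h5 : 0 < 1 - 2*u := by linarith
    have hs1 : 0 < Real.sqrt (1 - 2*u) := Real.sqrt_pos.2 h5
    have hs2 : 0 < Real.sqrt (1 + 2*u) := Real.sqrt_pos.2 h3
    have hxu : (0:ℝ) < |x - u| := lt_of_lt_of_le hδ hdu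
    have hb1 : Real.sqrt (1 + 2*a') ≤ Real.sqrt (1 + 2*u) :=
      Real.sqrt_le_sqrt (by linarith)
    have h2u : |2*u| ≤ 1 := by rw [abs_le]; constructor <;> linarith
    have key : ‖hfun x u‖ ≤ (δ * Real.sqrt (1 + 2*a'))⁻¹ * (Real.sqrt (1 - 2*u))⁻¹ := by
      rw [Real.norm_eq_abs]
      unfold hfun
      rw [hs, abs_div, abs_mul (x - u), abs_of_nonneg (mul_nonneg hs1.le hs2.le)]
      rw [div_le_iff₀ (by positivity)]
      have expand : (δ * Real.sqrt (1 + 2*a'))⁻¹ * (Real.sqrt (1 - 2*u))⁻¹ *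
          (|x - u| * (Real.sqrt (1 - 2*u) * Real.sqrt (1 + 2*u)))
          = (|x-u| / δ) * (Real.sqrt (1+2*u) / Real.sqrt (1+2*a')) := by
        field_simp
      rw [expand]
      have e1 : (1:ℝ) ≤ |x-u|/δ := (one_le_div hδ).2 hdu
      have e2 : (1:ℝ) ≤ Real.sqrt (1+2*u) / Real.sqrt (1+2*a') := (one_le_div hsa).2 hb1
      nlinarith
    calc ‖hfun x u‖ ≤ (δ * Real.sqrt (1 + 2*a'))⁻¹ * (Real.sqrt (1 - 2*u))⁻¹ := key
      _ = (δ * Real.sqrt (1 + 2*a'))⁻¹ * (1 - 2*u) ^ (-(1/2) : ℝ) := by rw [hrp]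

lemma hfun_neg (x u : ℝ) : hfun (-x) (0 - u) = hfun x u := by
  unfold hfun
  rw [show (0:ℝ) - u = -u by ring]
  rw [show (1 - 4*(-u)^2 : ℝ) = 1 - 4*u^2 by ring]
  rw [show (-x - -u : ℝ) = -(x - u) by ring]
  rw [mul_neg, neg_mul, neg_div_neg_eq]

lemma II_left {x b' δ : ℝ} (hδ : 0 < δ) (hb : b' < 1/2) (hab : -(1/2) ≤ b')
    (hd : ∀ u ∈ Icc (-(1/2):ℝ) b', δ ≤ |x - u|) :
    IntervalIntegrable (hfun x) volume (-(1/2)) b' := by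
  have H : IntervalIntegrable (hfun (-x)) volume (-b') (1/2) := by
    apply II_right hδ (by linarith) (by linarith)
    intro u hu
    have h1 := hd (-u) ⟨by linarith [hu.2], by linarith [hu.1]⟩
    rwa [show x - -u = -(-x - u) by ring, abs_neg] at h1
  have H2 := (H.comp_sub_left 0)
  have H3 : IntervalIntegrable (fun u => hfun (-x) (0 - u)) volume b' (-(1/2)) := by
    simpa using H2
  have heq : (fun u => hfun (-x) (0 - u)) = hfun x := funext (hfun_neg x)
  rw [heq] at H3
  exact H3.symm

noncomputable def NN (x u : ℝ) : ℝ := 1 - 4*x*u + Real.sqrt (1-4*x^2) * Real.sqrt (1-4*u^2)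

noncomputable def HA (x u : ℝ) : ℝ :=
  -Real.arcsin (2*u) + (2*x/Real.sqrt (1-4*x^2)) * (Real.log (NN x u) - Real.log (x - u))

noncomputable def HB (x u : ℝ) : ℝ :=
  -Real.arcsin (2*u) - (2*x/Real.sqrt (4*x^2-1)) * Real.arcsin ((1 - 4*x*u)/(2*x - 2*u))

lemma NN_pos {x u : ℝ} (hx : |x| < 1/2) (hu : |u| ≤ 1/2) : 0 < NN x u := by
  unfold NN
  have h1 : |4*x*u| < 1 := by
    rw [abs_mul]
    have e : |4*x| = 4*|x| := by rw [abs_mul]; norm_num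
    rw [e]
    nlinarith [abs_nonneg u, abs_nonneg x,
      mul_le_mul_of_nonneg_left hu (by positivity : (0:ℝ) ≤ 4*|x|)]
  nlinarith [abs_lt.1 h1, Real.sqrt_nonneg (1-4*x^2), Real.sqrt_nonneg (1-4*u^2)]

lemma hasDerivAt_sqrt_inner (u : ℝ) (h : (1 - 4*u^2 : ℝ) ≠ 0) :
    HasDerivAt (fun u : ℝ => Real.sqrt (1 - 4*u^2)) (-(4*u) / Real.sqrt (1-4*u^2)) u := by
  have hi : HasDerivAt (fun u : ℝ => 1 - 4*u^2) (-(8*u)) u := by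
    have h2 := ((hasDerivAt_pow 2 u).const_mul (4:ℝ)).const_sub 1
    exact h2.congr_deriv (by push_cast; ring)
  have h3 := (Real.hasDerivAt_sqrt h).comp u hi
  apply h3.congr_deriv
  field_simp
  ring

lemma hasDerivAt_arcsin2 {u : ℝ} (hu : |u| < 1/2) :
    HasDerivAt (fun u : ℝ => Real.arcsin (2*u)) (2 / Real.sqrt (1-4*u^2)) u := by
  have h' := abs_lt.1 hu
  have h1 : (2*u : ℝ) ≠ -1 := by intro h; linarith
  have h2 : (2*u : ℝ) ≠ 1 := by intro h; linarith
  have hi : HasDerivAt (fun u : ℝ => 2*u) 2 u := by simpa using (hasDerivAt_id u).const_mul (2:ℝ)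
  have h3 := (Real.hasDerivAt_arcsin h1 h2).comp u hi
  apply h3.congr_deriv
  rw [show (1 - (2*u)^2 : ℝ) = 1 - 4*u^2 by ring]
  ring

lemma hasDerivAt_HA {x u : ℝ} (hx : |x| < 1/2) (hu : |u| < 1/2) (hne : x - u ≠ 0) :
    HasDerivAt (HA x) (hfun x u) u := by
  set b := Real.sqrt (1-4*x^2) with hbdef
  set s := Real.sqrt (1-4*u^2) with hsdef
  have hbpos : 0 < b := Real.sqrt_pos.2 (by nlinarith [abs_lt.1 hx])
  have hspos : 0 < s := Real.sqrt_pos.2 (by nlinarith [abs_lt.1 hu])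
  have hb2 : b^2 = 1-4*x^2 := Real.sq_sqrt (by nlinarith [abs_lt.1 hx])
  have hs2 : s^2 = 1-4*u^2 := Real.sq_sqrt (by nlinarith [abs_lt.1 hu])
  have hN : 0 < NN x u := NN_pos hx hu.le
  have hN' : NN x u ≠ 0 := ne_of_gt hN
  have dN : HasDerivAt (fun u => NN x u) (-(4*x) + b * (-(4*u) / s)) u := by
    unfold NN
    have d1 : HasDerivAt (fun u : ℝ => 1 - 4*x*u) (-(4*x)) u := by
      have h2 := ((hasDerivAt_id u).const_mul (4*x)).const_sub 1
      exact h2.congr_deriv (by ring)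
    have d2 := (hasDerivAt_sqrt_inner u (by nlinarith [abs_lt.1 hu])).const_mul b
    rw [← hsdef] at d2
    rw [← hbdef]
    exact d1.add d2
  have dlogN : HasDerivAt (fun u => Real.log (NN x u)) ((-(4*x) + b * (-(4*u) / s)) / NN x u) u :=
    dN.log hN'
  have dxu : HasDerivAt (fun u : ℝ => x - u) (-1) u := by
    simpa using (hasDerivAt_id u).const_sub x
  have dlogxu : HasDerivAt (fun u => Real.log (x - u)) (-1 / (x - u)) u := dxu.log hne
  have darc := hasDerivAt_arcsin2 hu
  rw [← hsdef] at darc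
  have total : HasDerivAt (HA x)
      (-(2 / s) + (2*x/b) * ((-(4*x) + b * (-(4*u) / s)) / NN x u - -1 / (x - u))) u := by
    unfold HA
    rw [← hbdef]
    exact darc.neg.add ((dlogN.sub dlogxu).const_mul (2*x/b))
  apply total.congr_deriv
  have key : (-(4*x)*s - 4*u*b) * (x - u) + NN x u * s = b * NN x u := by
    unfold NN
    rw [← hbdef, ← hsdef]
    linear_combination b*hs2 - s*hb2
  unfold hfun
  rw [← hsdef]
  field_simp
  linear_combination x * key

lemma hasDerivAt_HB {x u : ℝ} (hx : 1/2 < x) (hu : |u| < 1/2) :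
    HasDerivAt (HB x) (hfun x u) u := by
  have h' := abs_lt.1 hu
  set D := Real.sqrt (4*x^2-1) with hDdef
  set s := Real.sqrt (1-4*u^2) with hsdef
  have hDpos : 0 < D := Real.sqrt_pos.2 (by nlinarith)
  have hspos : 0 < s := Real.sqrt_pos.2 (by nlinarith)
  have hD2 : D^2 = 4*x^2-1 := Real.sq_sqrt (by nlinarith)
  have hs2 : s^2 = 1-4*u^2 := Real.sq_sqrt (by nlinarith)
  have hg : 0 < 2*x - 2*u := by linarith
  have hg' : (2*x - 2*u : ℝ) ≠ 0 := ne_of_gt hg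
  have hne : x - u ≠ 0 := by intro h; apply hg'; linarith [h]
  have hwsq : (1 - 4*x*u)^2 < (2*x-2*u)^2 := by nlinarith [mul_pos (show (0:ℝ) < 4*x^2-1 by nlinarith) (show (0:ℝ) < 1-4*u^2 by nlinarith)]
  set w := (1 - 4*x*u)/(2*x - 2*u) with hwdef
  have hw1 : w^2 < 1 := by
    rw [hwdef, div_pow, div_lt_one (by positivity)]
    exact hwsq
  have hwne1 : w ≠ 1 := by intro h; rw [h] at hw1; norm_num at hw1
  have hwnem1 : w ≠ -1 := by intro h; rw [h] at hw1; norm_num at hw1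
  have dnum : HasDerivAt (fun u : ℝ => 1 - 4*x*u) (-(4*x)) u := by
    have h2 := ((hasDerivAt_id u).const_mul (4*x)).const_sub 1
    exact h2.congr_deriv (by ring)
  have dden : HasDerivAt (fun u : ℝ => 2*x - 2*u) (-2) u := by
    have h2 := ((hasDerivAt_id u).const_mul (2:ℝ)).const_sub (2*x)
    exact h2.congr_deriv (by ring)
  have dw : HasDerivAt (fun u : ℝ => (1 - 4*x*u)/(2*x - 2*u))
      ((-(4*x) * (2*x-2*u) - (1 - 4*x*u) * (-2))/(2*x-2*u)^2) u := dnum.div dden hg'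
  have darcw := (Real.hasDerivAt_arcsin hwnem1 hwne1).comp u dw
  have hsqw : Real.sqrt (1 - w^2) = D*s/(2*x-2*u) := by
    have he : 1 - w^2 = (D*s/(2*x-2*u))^2 := by
      rw [hwdef]
      field_simp
      linear_combination (-(s^2)) * hD2 + (-(4*x^2-1)) * hs2
    rw [he, Real.sqrt_sq (by positivity)]
  rw [hsqw] at darcw
  have darc := hasDerivAt_arcsin2 hu
  rw [← hsdef] at darc
  have total : HasDerivAt (HB x)
      (-(2/s) - (2*x/D) * ((1 / (D*s/(2*x-2*u))) * ((-(4*x) * (2*x-2*u) - (1 - 4*x*u) * (-2))/(2*x-2*u)^2))) u := by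
    unfold HB
    rw [← hDdef]
    exact darc.neg.sub (darcw.const_mul (2*x/D))
  apply total.congr_deriv
  unfold hfun
  rw [← hsdef]
  field_simp
  linear_combination (-x) * hD2
lemma NN_cont (x : ℝ) : Continuous (fun u => NN x u) := by
  unfold NN; fun_prop

lemma contOn_HA {x : ℝ} (hx : |x| < 1/2) {S : Set ℝ} (hS : S ⊆ Icc (-(1/2):ℝ) (1/2))
    (hxS : ∀ u ∈ S, x - u ≠ 0) : ContinuousOn (HA x) S := by
  unfold HA
  apply ContinuousOn.add
  · exact (Real.continuous_arcsin.comp (continuous_const.mul continuous_id)).neg.continuousOn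
  · apply ContinuousOn.mul continuousOn_const
    apply ContinuousOn.sub
    · apply ContinuousOn.log (NN_cont x).continuousOn
      intro u hu
      have h1 := hS hu
      exact ne_of_gt (NN_pos hx (abs_le.2 ⟨by linarith [h1.1], h1.2⟩))
    · exact ContinuousOn.log (by fun_prop) hxS

lemma contOn_HB {x : ℝ} (hx : 1/2 < x) : ContinuousOn (HB x) (Icc (-(1/2):ℝ) (1/2)) := by
  unfold HB
  apply ContinuousOn.sub
  · exact (Real.continuous_arcsin.comp (continuous_const.mul continuous_id)).neg.continuousOn
  · apply ContinuousOn.mul continuousOn_const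
    apply Real.continuous_arcsin.comp_continuousOn
    apply ContinuousOn.div (by fun_prop) (by fun_prop)
    intro u hu
    have := hu.2
    intro h; rw [sub_eq_zero] at h; linarith [hu.2]

lemma support_reduce (x : ℝ) {A : Set ℝ} (hA : MeasurableSet A) :
    ∫ t in A, frakG (x-t)/t = ∫ t in A ∩ Ioo (x - 1/2) (x + 1/2), frakG (x-t)/t := by
  rw [← MeasureTheory.integral_indicator hA, ← MeasureTheory.integral_indicator (hA.inter measurableSet_Ioo)]
  congr 1; funext t
  by_cases ht : t ∈ Ioo (x-1/2) (x+1/2)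
  · by_cases htA : t ∈ A
    · rw [Set.indicator_of_mem htA, Set.indicator_of_mem (Set.mem_inter htA ht)]
    · rw [Set.indicator_of_notMem htA, Set.indicator_of_notMem (fun h => htA h.1)]
  · have hz : frakG (x - t) = 0 := by
      apply frakG_zero
      rw [abs_lt]
      push_neg
      intro h1
      rw [mem_Ioo] at ht
      push_neg at ht
      by_contra h2
      push_neg at h2
      have h3 := ht (by linarith)
      linarith
    have hzz : frakG (x-t)/t = 0 := by rw [hz, zero_div]
    by_cases htA : t ∈ A
    · rw [Set.indicator_of_mem htA, Set.indicator_of_notMem (fun h => ht h.2), hzz]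
    · rw [Set.indicator_of_notMem htA, Set.indicator_of_notMem (fun h => ht h.2)]

lemma conv_t_u (x a' b' : ℝ) :
    ∫ t in a'..b', frakG (x-t)/t = ∫ u in (x-b')..(x-a'), frakG u / (x - u) := by
  rw [← intervalIntegral.integral_comp_sub_left (fun u => frakG u / (x - u)) x]
  apply intervalIntegral.integral_congr
  intro t _
  simp only
  rw [show x - (x - t) = t by ring]

lemma conv_hfun {x a b : ℝ} (ha : a ∈ Icc (-(1/2):ℝ) (1/2)) (hb : b ∈ Icc (-(1/2):ℝ) (1/2)) :
    ∫ u in a..b, frakG u / (x-u) = ∫ u in a..b, hfun x u := by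
  apply intervalIntegral.integral_congr
  intro u hu
  have h1 : uIcc a b ⊆ Icc (-(1/2):ℝ) (1/2) := uIcc_subset_Icc ha hb
  have h2 := h1 hu
  exact frakG_div_eq_hfun (abs_le.2 ⟨by linarith [h2.1], h2.2⟩)
lemma measurableSet_absSet (ε : ℝ) : MeasurableSet {t : ℝ | ε ≤ |t|} :=
  (isClosed_le continuous_const continuous_abs).measurableSet

lemma main_int_B {x ε : ℝ} (hx : 1/2 < x) (hε : 0 < ε) (hε2 : ε < x - 1/2) :
    ∫ t in {t : ℝ | ε ≤ |t|}, frakG (x-t)/t = HB x (1/2) - HB x (-(1/2)) := by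
  rw [support_reduce x (measurableSet_absSet ε)]
  have hsub : Ioo (x-1/2) (x+1/2) ⊆ {t : ℝ | ε ≤ |t|} := by
    intro t ht
    have ht0 : (0:ℝ) < t := by linarith [ht.1]
    simp only [mem_setOf_eq, abs_of_pos ht0]
    linarith [ht.1]
  rw [inter_eq_self_of_subset_right hsub]
  rw [MeasureTheory.setIntegral_congr_set MeasureTheory.Ioo_ae_eq_Ioc]
  rw [← intervalIntegral.integral_of_le (by linarith)]
  rw [conv_t_u]
  rw [show x - (x+1/2) = -(1/2) by ring, show x - (x-1/2) = (1/2:ℝ) by ring]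
  rw [conv_hfun (by norm_num) (by norm_num)]
  have hd : ∀ u ∈ Icc (-(1/2):ℝ) (1/2), x - 1/2 ≤ |x - u| := by
    intro u hu
    rw [abs_of_pos (by linarith [hu.2])]
    linarith [hu.2]
  have hInt : IntervalIntegrable (hfun x) volume (-(1/2)) (1/2) := by
    refine (II_left (x := x) (b' := 0) (δ := x - 1/2) (by linarith) (by norm_num) (by norm_num)
        ?_).trans
      (II_right (x := x) (a' := 0) (δ := x - 1/2) (by linarith) (by norm_num) (by norm_num) ?_)
    · intro u hu; exact hd u ⟨hu.1, by linarith [hu.2]⟩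
    · intro u hu; exact hd u ⟨by linarith [hu.1], hu.2⟩
  exact intervalIntegral.integral_eq_sub_of_hasDeriv_right_of_le (by norm_num)
    (contOn_HB hx)
    (fun u hu => (hasDerivAt_HB hx (abs_lt.2 ⟨by linarith [hu.1], hu.2⟩)).hasDerivWithinAt)
    hInt

lemma HB_eval {x : ℝ} (hx : 1/2 < x) :
    HB x (1/2) - HB x (-(1/2)) = -Real.pi + 2*x*Real.pi/Real.sqrt (4*x^2-1) := by
  have hD : Real.sqrt (4*x^2-1) ≠ 0 := ne_of_gt (Real.sqrt_pos.2 (by nlinarith))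
  unfold HB
  have h3 : ((1 - 4*x*(1/2))/(2*x - 2*(1/2)) : ℝ) = -1 := by
    rw [show (1 - 4*x*(1/2) : ℝ) = -(2*x-1) by ring, show (2*x - 2*(1/2) : ℝ) = 2*x-1 by ring,
      neg_div, div_self (by linarith)]
  have h4 : ((1 - 4*x*(-(1/2)))/(2*x - 2*(-(1/2))) : ℝ) = 1 := by
    rw [show (1 - 4*x*(-(1/2)) : ℝ) = 2*x+1 by ring, show (2*x - 2*(-(1/2)) : ℝ) = 2*x+1 by ring,
      div_self (by linarith)]
  rw [h3, h4, show (2*(1/2:ℝ)) = 1 by norm_num, show (2*(-(1/2):ℝ)) = -1 by norm_num,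
    Real.arcsin_one, Real.arcsin_neg_one]
  field_simp
  ring
lemma transfer {x p q : ℝ} (hpq : p ≤ q) (hq : x - p ∈ Icc (-(1/2):ℝ) (1/2))
    (hp : x - q ∈ Icc (-(1/2):ℝ) (1/2))
    (hI : IntervalIntegrable (hfun x) volume (x-q) (x-p)) :
    IntegrableOn (fun t => frakG (x-t)/t) (Ioc p q) volume ∧
    ∫ t in Ioc p q, frakG (x-t)/t = ∫ u in (x-q)..(x-p), hfun x u := by
  have hle : x - q ≤ x - p := by linarith
  have h1 : IntegrableOn (hfun x) (Ioc (x-q) (x-p)) volume := hI.1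
  have hEq : EqOn (hfun x) (fun u => frakG u / (x-u)) (Ioc (x-q) (x-p)) := by
    intro u hu
    have h2 : |u| ≤ 1/2 := abs_le.2 ⟨by linarith [hu.1, hp.1], by linarith [hu.2, hq.2]⟩
    exact (frakG_div_eq_hfun h2).symm
  have h3 : IntegrableOn (fun u => frakG u/(x-u)) (Ioc (x-q) (x-p)) volume :=
    h1.congr_fun hEq measurableSet_Ioc
  have h4 : IntervalIntegrable (fun u => frakG u/(x-u)) volume (x-q) (x-p) :=
    (intervalIntegrable_iff_integrableOn_Ioc_of_le hle).2 h3
  have h5 := h4.comp_sub_left x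
  have hfe : (fun t => frakG (x - t)/(x - (x - t))) = (fun t => frakG (x-t)/t) := by
    funext t; rw [show x - (x-t) = t by ring]
  rw [hfe] at h5
  rw [show x-(x-q) = q by ring, show x-(x-p) = p by ring] at h5
  refine ⟨h5.symm.1, ?_⟩
  calc ∫ t in Ioc p q, frakG (x-t)/t = ∫ t in p..q, frakG (x-t)/t :=
        (intervalIntegral.integral_of_le hpq).symm
    _ = ∫ u in (x-q)..(x-p), frakG u/(x-u) := conv_t_u x p q
    _ = ∫ u in (x-q)..(x-p), hfun x u := conv_hfun hp hq

lemma main_int_A {x ε : ℝ} (hx : |x| < 1/2) (hε : 0 < ε) (hε2 : ε < x + 1/2)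
    (hε3 : ε < 1/2 - x) :
    ∫ t in {t : ℝ | ε ≤ |t|}, frakG (x-t)/t
      = (HA x (x-ε) - HA x (-(1/2))) + (HA x (1/2) - HA x (x+ε)) := by
  have h' := abs_lt.1 hx
  rw [support_reduce x (measurableSet_absSet ε)]
  have hset : {t : ℝ | ε ≤ |t|} ∩ Ioo (x-1/2) (x+1/2)
      = Ioc (x-1/2) (-ε) ∪ Ico ε (x+1/2) := by
    ext t
    simp only [mem_inter_iff, mem_setOf_eq, mem_Ioo, mem_union, mem_Ioc, mem_Ico, le_abs]
    constructor
    · rintro ⟨h1 | h1, h2, h3⟩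
      · right; exact ⟨h1, h3⟩
      · left; exact ⟨h2, by linarith⟩
    · rintro (⟨h1, h2⟩ | ⟨h1, h2⟩)
      · exact ⟨Or.inr (by linarith), h1, by linarith⟩
      · exact ⟨Or.inl h1, by linarith, h2⟩
  rw [hset]
  -- interval integrability in u
  have hIl : IntervalIntegrable (hfun x) volume (-(1/2)) (x-ε) := by
    apply II_left hε (by linarith) (by linarith)
    intro u hu
    rw [abs_of_pos (by linarith [hu.2] : (0:ℝ) < x - u)]
    linarith [hu.2]
  have hIr : IntervalIntegrable (hfun x) volume (x+ε) (1/2) := by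
    apply II_right hε (by linarith) (by linarith)
    intro u hu
    rw [abs_of_nonpos (by linarith [hu.1] : x - u ≤ 0)]
    linarith [hu.1]
  -- transfer both pieces
  have T1 := transfer (x := x) (p := x - 1/2) (q := -ε) (by linarith)
    (by constructor <;> [skip; skip] <;> norm_num)
    (by rw [show x - -ε = x + ε by ring]; exact ⟨by linarith, by linarith⟩)
    (by rw [show x - -ε = x + ε by ring, show x - (x - 1/2) = (1/2:ℝ) by ring]; exact hIr)
  have T2 := transfer (x := x) (p := ε) (q := x + 1/2) (by linarith)
    (by rw [show x - ε = x - ε by ring]; exact ⟨by linarith, by linarith⟩)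
    (by rw [show x - (x + 1/2) = -(1/2) by ring]; exact ⟨by norm_num, by norm_num⟩)
    (by rw [show x - (x + 1/2) = -(1/2) by ring, show x - ε = x - ε by ring]; exact hIl)
  have hdisj : Disjoint (Ioc (x-1/2) (-ε)) (Ico ε (x+1/2)) := by
    rw [Set.disjoint_left]
    rintro t ⟨_, h1⟩ ⟨h2, _⟩
    linarith
  rw [MeasureTheory.setIntegral_union hdisj measurableSet_Ico T1.1
    (T2.1.congr_set_ae MeasureTheory.Ico_ae_eq_Ioc)]
  rw [MeasureTheory.setIntegral_congr_set MeasureTheory.Ico_ae_eq_Ioc]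
  rw [T1.2, T2.2]
  rw [show x - -ε = x + ε by ring, show x - (x - 1/2) = (1/2:ℝ) by ring,
    show x - (x + 1/2) = -(1/2) by ring]
  -- FTC on both
  have F1 : ∫ u in (x+ε)..(1/2), hfun x u = HA x (1/2) - HA x (x+ε) := by
    apply intervalIntegral.integral_eq_sub_of_hasDeriv_right_of_le (by linarith)
    · apply contOn_HA hx (Icc_subset_Icc (by linarith) le_rfl)
      intro u hu
      have := hu.1
      intro hc; rw [sub_eq_zero] at hc; linarith [hu.1]
    · intro u hu
      refine (hasDerivAt_HA hx (abs_lt.2 ⟨by linarith [hu.1], hu.2⟩) ?_).hasDerivWithinAt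
      intro hc; rw [sub_eq_zero] at hc; linarith [hu.1]
    · exact hIr
  have F2 : ∫ u in (-(1/2))..(x-ε), hfun x u = HA x (x-ε) - HA x (-(1/2)) := by
    apply intervalIntegral.integral_eq_sub_of_hasDeriv_right_of_le (by linarith)
    · apply contOn_HA hx (Icc_subset_Icc le_rfl (by linarith))
      intro u hu
      intro hc; rw [sub_eq_zero] at hc; linarith [hu.2]
    · intro u hu
      refine (hasDerivAt_HA hx (abs_lt.2 ⟨by linarith [hu.1], by linarith [hu.2]⟩) ?_).hasDerivWithinAt
      intro hc; rw [sub_eq_zero] at hc; linarith [hu.2]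
    · exact hIl
  rw [F1, F2]
  ring
noncomputable def Psi (x ε : ℝ) : ℝ :=
  -Real.arcsin (2*(x-ε)) + Real.arcsin (2*(x+ε))
    + (2*x/Real.sqrt (1-4*x^2)) * (Real.log (NN x (x-ε)) - Real.log (NN x (x+ε)))

lemma HA_diff (x ε : ℝ) :
    (HA x (x-ε) - HA x (-(1/2))) + (HA x (1/2) - HA x (x+ε))
      = (HA x (1/2) - HA x (-(1/2))) + Psi x ε := by
  unfold HA Psi
  rw [show x - (x-ε) = ε by ring, show x - (x+ε) = -ε by ring, Real.log_neg_eq_log]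
  ring

lemma HA_eval {x : ℝ} (hx : |x| < 1/2) : HA x (1/2) - HA x (-(1/2)) = -Real.pi := by
  have h' := abs_lt.1 hx
  unfold HA NN
  rw [show (2*(1/2:ℝ)) = 1 by norm_num, show (2*(-(1/2):ℝ)) = -1 by norm_num,
    Real.arcsin_one, Real.arcsin_neg_one]
  rw [show Real.sqrt (1 - 4*(1/2:ℝ)^2) = 0 by norm_num,
    show Real.sqrt (1 - 4*(-(1/2):ℝ)^2) = 0 by norm_num]
  simp only [mul_zero, add_zero]
  rw [show (1 - 4*x*(1/2) : ℝ) = 2*(1/2 - x) by ring,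
    show (1 - 4*x*(-(1/2)) : ℝ) = 2*(x + 1/2) by ring]
  rw [Real.log_mul two_ne_zero (by linarith : (1/2 - x:ℝ) ≠ 0),
    Real.log_mul two_ne_zero (by linarith : (x + 1/2:ℝ) ≠ 0)]
  rw [show (x - 1/2 : ℝ) = -(1/2 - x) by ring, Real.log_neg_eq_log]
  rw [show (x - -(1/2) : ℝ) = x + 1/2 by ring]
  ring

lemma tendsto_Psi {x : ℝ} (hx : |x| < 1/2) :
    Filter.Tendsto (Psi x) (nhdsWithin 0 (Ioi 0)) (nhds 0) := by
  have hNx : NN x x ≠ 0 := ne_of_gt (NN_pos hx hx.le)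
  have c1 : ContinuousAt (fun ε : ℝ => Real.log (NN x (x-ε))) 0 := by
    apply ContinuousAt.log
    · exact Continuous.continuousAt (by unfold NN; fun_prop)
    · simpa using hNx
  have c2 : ContinuousAt (fun ε : ℝ => Real.log (NN x (x+ε))) 0 := by
    apply ContinuousAt.log
    · exact Continuous.continuousAt (by unfold NN; fun_prop)
    · simpa using hNx
  have c3 : ContinuousAt (Psi x) 0 := by
    unfold Psi
    apply ContinuousAt.add
    · apply ContinuousAt.add
      · exact ((Real.continuous_arcsin.comp (by fun_prop)).continuousAt).neg
      · exact (Real.continuous_arcsin.comp (by fun_prop)).continuousAt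
    · exact (c1.sub c2).const_mul _
  have h0 : Psi x 0 = 0 := by unfold Psi; norm_num
  have := c3.tendsto
  rw [h0] at this
  exact this.mono_left nhdsWithin_le_nhds

lemma pv_odd {x L : ℝ} (h : pvHilbAt frakG x L) : pvHilbAt frakG (-x) L := by
  unfold pvHilbAt at *
  have key : ∀ ε : ℝ, ∫ t in {t : ℝ | ε ≤ |t|}, frakG (-x - t)/t
      = ∫ t in {t : ℝ | ε ≤ |t|}, frakG (x - t)/t := by
    intro ε
    have hA := measurableSet_absSet ε
    rw [← MeasureTheory.integral_indicator hA, ← MeasureTheory.integral_indicator hA]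
    have hfe : (Set.indicator {t : ℝ | ε ≤ |t|} (fun t => frakG (-x - t)/t))
        = (fun t => Set.indicator {t : ℝ | ε ≤ |t|} (fun t => frakG (x - t)/t) (-t)) := by
      funext t
      by_cases ht : t ∈ {t : ℝ | ε ≤ |t|}
      · rw [Set.indicator_of_mem ht,
          Set.indicator_of_mem (show -t ∈ {t : ℝ | ε ≤ |t|} by
            simp only [mem_setOf_eq, abs_neg]; exact ht)]
        rw [show x - -t = x + t by ring, show (-x - t : ℝ) = -(x+t) by ring, frakG_odd,
          neg_div, div_neg]
      · rw [Set.indicator_of_notMem ht,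
          Set.indicator_of_notMem (show -t ∉ {t : ℝ | ε ≤ |t|} by
            simp only [mem_setOf_eq, abs_neg]; exact ht)]
    rw [hfe, MeasureTheory.integral_neg_eq_self]
  have hfun_eq : (fun ε : ℝ => (1 / Real.pi) * ∫ t in {t : ℝ | ε ≤ |t|}, frakG (-x - t) / t)
      = (fun ε : ℝ => (1 / Real.pi) * ∫ t in {t : ℝ | ε ≤ |t|}, frakG (x - t) / t) := by
    funext ε; rw [key ε]
  rw [hfun_eq]
  exact h
lemma habs_frakG : ∀ u ∈ Icc (0:ℝ) (1/2), |frakG u| = 2*u/Real.sqrt (1-4*u^2) := by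
  intro u hu
  rcases lt_or_eq_of_le hu.2 with h | h
  · have h2 : |u| < 1/2 := abs_lt.2 ⟨by linarith [hu.1], h⟩
    rw [frakG, if_pos h2,
      abs_of_nonneg (div_nonneg (by linarith [hu.1]) (Real.sqrt_nonneg _))]
  · rw [h]
    norm_num [frakG]

lemma frakG_meas : Measurable frakG := by
  unfold frakG
  apply Measurable.ite ((isOpen_lt continuous_abs continuous_const).measurableSet) <;> fun_prop

lemma I2_half : IntervalIntegrable (fun u => 2*u/Real.sqrt (1-4*u^2)) volume 0 (1/2) := by
  apply IntervalIntegrable.mono_fun' (g := fun u => (1 - 2*u) ^ (-(1/2) : ℝ))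
    (II_rpow_right 0 (1/2))
    ((Measurable.aestronglyMeasurable (by fun_prop)).restrict)
  rw [uIoc_of_le (by norm_num)]
  filter_upwards [MeasureTheory.ae_restrict_mem measurableSet_Ioc] with u hu
  obtain ⟨h1, h2⟩ := hu
  rcases eq_or_lt_of_le h2 with he | hlt
  · subst he
    norm_num
  · have h5 : 0 < 1 - 2*u := by linarith
    have hs1 : 0 < Real.sqrt (1 - 2*u) := Real.sqrt_pos.2 h5
    have hs2 : 1 ≤ Real.sqrt (1 + 2*u) :=
      le_trans (le_of_eq Real.sqrt_one.symm) (Real.sqrt_le_sqrt (by linarith))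
    have hs : Real.sqrt (1 - 4*u^2) = Real.sqrt (1 - 2*u) * Real.sqrt (1 + 2*u) :=
      sqrt_fact (by linarith)
    have hrp : (1 - 2*u) ^ (-(1/2) : ℝ) = (Real.sqrt (1 - 2*u))⁻¹ := by
      rw [Real.rpow_neg h5.le, Real.sqrt_eq_rpow]
    rw [hrp, Real.norm_eq_abs, hs, abs_div,
      abs_of_nonneg (by linarith : (0:ℝ) ≤ 2*u),
      abs_of_nonneg (mul_nonneg hs1.le (by linarith : (0:ℝ) ≤ Real.sqrt (1+2*u)))]
    rw [div_le_iff₀ (by positivity)]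
    have : (Real.sqrt (1-2*u))⁻¹ * (Real.sqrt (1-2*u) * Real.sqrt (1+2*u)) = Real.sqrt (1+2*u) := by
      field_simp
    rw [this]
    nlinarith
lemma I2_value : ∫ u in (0:ℝ)..(1/2), 2*u/Real.sqrt (1-4*u^2) = 1/2 := by
  have hF := intervalIntegral.integral_eq_sub_of_hasDeriv_right_of_le (f := fun u => -(1/2) * Real.sqrt (1-4*u^2))
    (f' := fun u => 2*u/Real.sqrt (1-4*u^2)) (by norm_num)
    (by fun_prop)
    (fun u hu => by
      have hpos : (0:ℝ) < 1 - 4*u^2 := by nlinarith [hu.1, hu.2]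
      have hsne : Real.sqrt (1-4*u^2) ≠ 0 := ne_of_gt (Real.sqrt_pos.2 hpos)
      have := (hasDerivAt_sqrt_inner u (ne_of_gt hpos)).const_mul (-(1/2) : ℝ)
      refine (this.congr_deriv ?_).hasDerivWithinAt
      field_simp
      ring)
    I2_half
  rw [hF]
  norm_num

lemma abs_frakG_odd : (fun u : ℝ => |frakG (0 - u)|) = fun u => |frakG u| := by
  funext u
  rw [show (0:ℝ) - u = -u by ring, frakG_odd, abs_neg]

lemma part1 : (∫ u : ℝ, |frakG u|) = 1 := by
  have habs2 : ∀ u ∈ uIcc (0:ℝ) (1/2), |frakG u| = 2*u/Real.sqrt (1-4*u^2) := by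
    rw [uIcc_of_le (by norm_num)]; exact habs_frakG
  have hI2 : IntervalIntegrable (fun u => |frakG u|) volume 0 (1/2) := by
    apply IntervalIntegrable.mono_fun' (g := fun u => |2*u/Real.sqrt (1-4*u^2)|) I2_half.abs
      ((Measurable.aestronglyMeasurable frakG_meas.abs).restrict)
    rw [uIoc_of_le (by norm_num)]
    filter_upwards [MeasureTheory.ae_restrict_mem measurableSet_Ioc] with u hu
    rw [Real.norm_eq_abs, abs_abs, habs_frakG u ⟨hu.1.le, hu.2⟩]
    exact le_abs_self _
  have hI1 : IntervalIntegrable (fun u => |frakG u|) volume (-(1/2)) 0 := by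
    have h := hI2.comp_sub_left 0
    rw [show (0:ℝ) - 0 = 0 by ring, show (0:ℝ) - 1/2 = -(1/2) by ring] at h
    rw [abs_frakG_odd] at h
    exact h.symm
  have hval2 : ∫ u in (0:ℝ)..(1/2), |frakG u| = 1/2 := by
    rw [intervalIntegral.integral_congr habs2, I2_value]
  have hval1 : ∫ u in (-(1/2):ℝ)..0, |frakG u| = 1/2 := by
    have h := intervalIntegral.integral_comp_sub_left (fun u => |frakG u|) 0
      (a := -(1/2)) (b := 0)
    rw [abs_frakG_odd] at h
    rw [show (0:ℝ) - 0 = 0 by ring, show (0:ℝ) - -(1/2) = 1/2 by ring] at h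
    rw [h, hval2]
  have hind : (fun u => |frakG u|) = Set.indicator (Ioc (-(1/2):ℝ) (1/2)) (fun u => |frakG u|) := by
    funext u
    by_cases hu : u ∈ Ioc (-(1/2):ℝ) (1/2)
    · rw [Set.indicator_of_mem hu]
    · rw [Set.indicator_of_notMem hu]
      rw [mem_Ioc] at hu
      push_neg at hu
      have hz : frakG u = 0 := by
        apply frakG_zero
        rw [abs_lt]
        push_neg
        intro h1
        exact (hu (by linarith)).le
      rw [hz, abs_zero]
  rw [hind, MeasureTheory.integral_indicator measurableSet_Ioc,
    ← intervalIntegral.integral_of_le (by norm_num)]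
  rw [← intervalIntegral.integral_add_adjacent_intervals hI1 hI2, hval1, hval2]
  norm_num
lemma caseA_pv {x : ℝ} (hx : |x| < 1/2) : pvHilbAt frakG x (-1) := by
  have h' := abs_lt.1 hx
  unfold pvHilbAt
  have hT : Filter.Tendsto (fun ε => (1/Real.pi) * (-Real.pi + Psi x ε))
      (nhdsWithin 0 (Ioi 0)) (nhds (-1)) := by
    have h1 := (Filter.Tendsto.add (tendsto_const_nhds (x := (-Real.pi : ℝ)))
      (tendsto_Psi hx)).const_mul (1/Real.pi)
    rw [add_zero] at h1
    have : (1/Real.pi) * (-Real.pi) = -1 := by field_simp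
    rwa [this] at h1
  apply hT.congr'
  have hmem : Ioo (0:ℝ) (min (x + 1/2) (1/2 - x)) ∈ nhdsWithin (0:ℝ) (Ioi 0) :=
    Ioo_mem_nhdsGT_of_mem ⟨le_refl 0, by simp only [lt_min_iff]; constructor <;> linarith⟩
  filter_upwards [hmem] with ε hε
  obtain ⟨hε1, hε2⟩ := hε
  rw [lt_min_iff] at hε2
  rw [main_int_A hx hε1 hε2.1 hε2.2, HA_diff, HA_eval hx]

lemma caseB_pv {x : ℝ} (hx : 1/2 < x) :
    pvHilbAt frakG x (-1 + 2*x/Real.sqrt (4*x^2 - 1)) := by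
  unfold pvHilbAt
  have hD : Real.sqrt (4*x^2-1) ≠ 0 := ne_of_gt (Real.sqrt_pos.2 (by nlinarith))
  have hval : (1/Real.pi) * (HB x (1/2) - HB x (-(1/2))) = -1 + 2*x/Real.sqrt (4*x^2 - 1) := by
    rw [HB_eval hx]
    field_simp
  apply Filter.Tendsto.congr' _ (tendsto_const_nhds (x := -1 + 2*x/Real.sqrt (4*x^2 - 1)))
  have hmem : Ioo (0:ℝ) (x - 1/2) ∈ nhdsWithin (0:ℝ) (Ioi 0) :=
    Ioo_mem_nhdsGT_of_mem ⟨le_refl 0, by linarith⟩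
  filter_upwards [hmem] with ε hε
  rw [main_int_B hx hε.1 hε.2, hval]

/-- `∫|𝔊| = 1`, and for every `x` with `|x| ≠ 1/2` the principal value limit defining
`𝓗(𝔊)(x)` exists and equals `−1` if `|x| < 1/2` and `−1 + 2|x|/√(4x² − 1)` if `|x| > 1/2`. -/
theorem stmt14 :
    (∫ x : ℝ, |frakG x|) = 1 ∧
    ∀ x : ℝ, |x| ≠ 1/2 →
      pvHilbAt frakG x
        (if |x| < 1/2 then -1 else -1 + 2 * |x| / Real.sqrt (4 * x ^ 2 - 1)) := by
  refine ⟨part1, ?_⟩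
  intro x hx
  rcases lt_trichotomy (|x|) (1/2) with hlt | heq | hgt
  · rw [if_pos hlt]
    exact caseA_pv hlt
  · exact absurd heq hx
  · rw [if_neg (by linarith)]
    rcases le_or_gt 0 x with hx0 | hx0
    · have hxgt : 1/2 < x := by rwa [abs_of_nonneg hx0] at hgt
      have h := caseB_pv hxgt
      have he : -1 + 2*x/Real.sqrt (4*x^2 - 1) = -1 + 2*|x|/Real.sqrt (4*x^2-1) := by
        rw [abs_of_nonneg hx0]
      rwa [he] at h
    · have hxgt : 1/2 < -x := by rwa [abs_of_neg hx0] at hgt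
      have h := pv_odd (caseB_pv hxgt)
      rw [neg_neg] at h
      have he : -1 + 2*(-x)/Real.sqrt (4*(-x)^2 - 1) = -1 + 2*|x|/Real.sqrt (4*x^2-1) := by
        rw [abs_of_neg hx0, show ((-x)^2 : ℝ) = x^2 by ring]
      rwa [he] at h
end
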